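/- arXiv:1603.00722 — 5 statements merged into one kernel-verified Lean document; each statement's English description precedes it below -/
import Mathlib

section
/- (Atkinson dissection) For complex a, b with Re(a) > 1 and Re(b) > 1, and for all x ∈ [0,1], ζ₁(a,x) ζ₁(b,x) = ζ₁(a+b, x) + Σ_{n=1}^∞ { ζ₁(a, n+x)/(n+x)^b + ζ₁(b, n+x)/(n+x)^a }, where the series converges absolutely. -/
open scoped BigOperators

/-- The auxiliary Hurwitz zeta function `ζ₁(a,x) = ∑_{k=1}^∞ (k+x)^{-a}` (for `Re a > 1`). -/
noncomputable def zeta1 (a : ℂ) (x : ℝ) : ℂ := ∑' k : ℕ, ((k : ℂ) + 1 + x) ^ (-a)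


lemma atk_norm_term (c : ℂ) (t : ℝ) (ht : 0 ≤ t) (k : ℕ) :
    ‖((k:ℂ) + 1 + (t:ℂ)) ^ (-c)‖ = ((k:ℝ) + 1 + t) ^ (-c.re) := by
  have hpos : (0:ℝ) < (k:ℝ) + 1 + t := by positivity
  have h : ((k:ℂ) + 1 + (t:ℂ)) = (((k:ℝ) + 1 + t : ℝ) : ℂ) := by push_cast; ring
  rw [h, Complex.norm_cpow_eq_rpow_re_of_pos hpos, Complex.neg_re]

lemma atk_summable_norm (c : ℂ) (hc : 1 < c.re) (t : ℝ) (ht : 0 ≤ t) :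
    Summable (fun k : ℕ => ‖((k:ℂ) + 1 + (t:ℂ)) ^ (-c)‖) := by
  have h := (Real.summable_one_div_nat_add_rpow (1 + t) c.re).2 hc
  refine h.congr fun k => ?_
  rw [atk_norm_term c t ht k, show (k:ℝ) + (1 + t) = (k:ℝ) + 1 + t by ring,
    abs_of_pos (by positivity), Real.rpow_neg (by positivity), one_div]

lemma atk_zeta1_shift (c : ℂ) (x : ℝ) (n : ℕ) :
    zeta1 c ((n:ℝ) + 1 + x) = ∑' k : ℕ, (((n + k + 1 : ℕ):ℂ) + 1 + (x:ℂ)) ^ (-c) := by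
  unfold zeta1
  refine tsum_congr fun k => ?_
  congr 1
  push_cast
  ring

/-- Atkinson's dissection: for `Re a > 1`, `Re b > 1` and `x ∈ [0,1]`,
`ζ₁(a,x) ζ₁(b,x) = ζ₁(a+b,x) + ∑_{n=1}^∞ { ζ₁(a,n+x)/(n+x)^b + ζ₁(b,n+x)/(n+x)^a }`,
the series converging absolutely (the sum over `n ≥ 1` is written with index shifted by 1). -/
theorem atkinson_dissection (a b : ℂ) (ha : 1 < a.re) (hb : 1 < b.re)
    (x : ℝ) (hx : x ∈ Set.Icc (0:ℝ) 1) :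
    Summable (fun n : ℕ => ‖zeta1 a ((n : ℝ) + 1 + x) / ((n : ℂ) + 1 + x) ^ b
        + zeta1 b ((n : ℝ) + 1 + x) / ((n : ℂ) + 1 + x) ^ a‖) ∧
    zeta1 a x * zeta1 b x =
      zeta1 (a + b) x + ∑' n : ℕ, (zeta1 a ((n : ℝ) + 1 + x) / ((n : ℂ) + 1 + x) ^ b
        + zeta1 b ((n : ℝ) + 1 + x) / ((n : ℂ) + 1 + x) ^ a) := by
  obtain ⟨hx0, -⟩ := hx
  set F : ℕ → ℂ := fun m => ((m:ℂ) + 1 + (x:ℂ)) ^ (-a) with hF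
  set G : ℕ → ℂ := fun n => ((n:ℂ) + 1 + (x:ℂ)) ^ (-b) with hG
  set f : ℕ × ℕ → ℂ := fun p => F p.1 * G p.2 with hfdef
  have hFn : Summable (fun m => ‖F m‖) := atk_summable_norm a ha x hx0
  have hGn : Summable (fun n => ‖G n‖) := atk_summable_norm b hb x hx0
  -- absolute summability on the product
  have hfn : Summable (fun p : ℕ × ℕ => ‖f p‖) := hFn.mul_norm hGn
  have hf : Summable f := hfn.of_norm
  -- the three injections
  set dmap : ℕ → ℕ × ℕ := fun m => (m, m) with hdmap
  set umap : ℕ × ℕ → ℕ × ℕ := fun p => (p.1 + p.2 + 1, p.1) with humap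
  set lmap : ℕ × ℕ → ℕ × ℕ := fun p => (p.1, p.1 + p.2 + 1) with hlmap
  have hdinj : Function.Injective dmap := fun p q h => by
    simpa [dmap, Prod.ext_iff] using h
  have huinj : Function.Injective umap := fun p q h => by
    simp only [umap, Prod.ext_iff] at h
    exact Prod.ext (by omega) (by omega)
  have hlinj : Function.Injective lmap := fun p q h => by
    simp only [lmap, Prod.ext_iff] at h
    exact Prod.ext (by omega) (by omega)
  -- summability of the composed families
  have hfu : Summable (f ∘ umap) := hf.comp_injective huinj
  have hfl : Summable (f ∘ lmap) := hf.comp_injective hlinj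
  have hfun : Summable (fun p => ‖(f ∘ umap) p‖) := hfn.comp_injective huinj
  have hfln : Summable (fun p => ‖(f ∘ lmap) p‖) := hfn.comp_injective hlinj
  -- fiberwise sums
  set gU : ℕ → ℂ := fun n => ∑' k : ℕ, f (umap (n, k)) with hgU
  set gL : ℕ → ℂ := fun n => ∑' k : ℕ, f (lmap (n, k)) with hgL
  have hgUsum : Summable gU := by
    refine Summable.congr ?_ (fun n => rfl)
    exact ⟨_, (hfu.hasSum.prod_fiberwise fun n => (hfu.prod_factor n).hasSum)⟩
  have hgLsum : Summable gL := by
    refine Summable.congr ?_ (fun n => rfl)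
    exact ⟨_, (hfl.hasSum.prod_fiberwise fun n => (hfl.prod_factor n).hasSum)⟩
  -- identification of the fiberwise sums
  have hposC : ∀ n : ℕ, ((n:ℂ) + 1 + (x:ℂ)) ≠ 0 := by
    intro n
    have hpos : (0:ℝ) < (n:ℝ) + 1 + x := by positivity
    have h : ((n:ℂ) + 1 + (x:ℂ)) = (((n:ℝ) + 1 + x : ℝ) : ℂ) := by push_cast; ring
    rw [h]
    exact_mod_cast hpos.ne'
  have hUeq : ∀ n : ℕ, gU n = zeta1 a ((n:ℝ) + 1 + x) / ((n:ℂ) + 1 + x) ^ b := by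
    intro n
    have : gU n = (∑' k : ℕ, F (n + k + 1)) * G n := by
      rw [hgU]
      simp only [umap, f]
      exact tsum_mul_right
    rw [this, atk_zeta1_shift a x n]
    simp only [hG]
    rw [Complex.cpow_neg, div_eq_mul_inv]
  have hLeq : ∀ n : ℕ, gL n = zeta1 b ((n:ℝ) + 1 + x) / ((n:ℂ) + 1 + x) ^ a := by
    intro n
    have : gL n = F n * (∑' k : ℕ, G (n + k + 1)) := by
      rw [hgL]
      simp only [lmap, f]
      exact tsum_mul_left
    rw [this, atk_zeta1_shift b x n]
    simp only [hF]
    rw [Complex.cpow_neg, div_eq_mul_inv, mul_comm]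
  -- summability of the stated series (absolute)
  have hNU : Summable (fun n : ℕ => ∑' k : ℕ, ‖f (umap (n, k))‖) :=
    ((summable_prod_of_nonneg (fun _ => norm_nonneg _)).1 hfun).2
  have hNL : Summable (fun n : ℕ => ∑' k : ℕ, ‖f (lmap (n, k))‖) :=
    ((summable_prod_of_nonneg (fun _ => norm_nonneg _)).1 hfln).2
  have hsummable : Summable (fun n : ℕ => ‖zeta1 a ((n : ℝ) + 1 + x) / ((n : ℂ) + 1 + x) ^ b
      + zeta1 b ((n : ℝ) + 1 + x) / ((n : ℂ) + 1 + x) ^ a‖) := by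
    refine Summable.of_nonneg_of_le (fun n => norm_nonneg _) (fun n => ?_) (hNU.add hNL)
    rw [← hUeq n, ← hLeq n]
    refine (norm_add_le _ _).trans (add_le_add ?_ ?_)
    · exact norm_tsum_le_tsum_norm (hfun.prod_factor n)
    · exact norm_tsum_le_tsum_norm (hfln.prod_factor n)
  refine ⟨hsummable, ?_⟩
  -- ranges of the three injections
  have hDr : Set.range dmap = {p : ℕ × ℕ | p.1 = p.2} := by
    ext ⟨m, n⟩
    simp only [Set.mem_range, Set.mem_setOf_eq, dmap, Prod.ext_iff]
    constructor
    · rintro ⟨i, h1, h2⟩; omega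
    · intro h; exact ⟨m, rfl, by omega⟩
  have hUr : Set.range umap = {p : ℕ × ℕ | p.2 < p.1} := by
    ext ⟨m, n⟩
    simp only [Set.mem_range, Set.mem_setOf_eq, umap, Prod.exists, Prod.ext_iff]
    constructor
    · rintro ⟨i, j, h1, h2⟩; omega
    · intro h; exact ⟨n, m - n - 1, by omega, rfl⟩
  have hLr : Set.range lmap = {p : ℕ × ℕ | p.1 < p.2} := by
    ext ⟨m, n⟩
    simp only [Set.mem_range, Set.mem_setOf_eq, lmap, Prod.exists, Prod.ext_iff]
    constructor
    · rintro ⟨i, j, h1, h2⟩; omega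
    · intro h; exact ⟨m, n - m - 1, rfl, by omega⟩
  have hsplit : (Set.univ : Set (ℕ × ℕ)) =
      Set.range dmap ∪ (Set.range umap ∪ Set.range lmap) := by
    rw [hDr, hUr, hLr]
    ext ⟨m, n⟩
    simp only [Set.mem_univ, Set.mem_union, Set.mem_setOf_eq, true_iff]
    omega
  have hd1 : Disjoint (Set.range dmap) (Set.range umap ∪ Set.range lmap) := by
    rw [hDr, hUr, hLr, Set.disjoint_left]
    rintro ⟨m, n⟩ h1 h2
    simp only [Set.mem_setOf_eq, Set.mem_union] at h1 h2
    omega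
  have hd2 : Disjoint (Set.range umap) (Set.range lmap) := by
    rw [hUr, hLr, Set.disjoint_left]
    rintro ⟨m, n⟩ h1 h2
    simp only [Set.mem_setOf_eq] at h1 h2
    omega
  -- compute the three partial sums
  have hdiag : ∑' m : ℕ, f (dmap m) = zeta1 (a + b) x := by
    unfold zeta1
    refine tsum_congr fun m => ?_
    simp only [dmap, f, hF, hG]
    rw [neg_add, Complex.cpow_add _ _ (hposC m)]
  have hUsum : ∑' p : ℕ × ℕ, f (umap p) = ∑' n : ℕ, gU n :=
    Summable.tsum_prod hfu
  have hLsum : ∑' p : ℕ × ℕ, f (lmap p) = ∑' n : ℕ, gL n :=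
    Summable.tsum_prod hfl
  calc zeta1 a x * zeta1 b x
      = ∑' p : ℕ × ℕ, f p := tsum_mul_tsum_of_summable_norm hFn hGn
    _ = ∑' p : (Set.univ : Set (ℕ × ℕ)), f p := (tsum_univ f).symm
    _ = ∑' p : ↥(Set.range dmap ∪ (Set.range umap ∪ Set.range lmap)), f p := by
        rw [← hsplit]
    _ = (∑' p : Set.range dmap, f p)
        + ∑' p : ↥(Set.range umap ∪ Set.range lmap), f p :=
        Summable.tsum_union_disjoint hd1 (hf.subtype _) (hf.subtype _)
    _ = (∑' p : Set.range dmap, f p)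
        + ((∑' p : Set.range umap, f p) + ∑' p : Set.range lmap, f p) := by
        rw [Summable.tsum_union_disjoint hd2 (hf.subtype _) (hf.subtype _)]
    _ = zeta1 (a + b) x + (∑' n : ℕ, gU n + ∑' n : ℕ, gL n) := by
        rw [tsum_range f hdinj, tsum_range f huinj, tsum_range f hlinj,
          hdiag, hUsum, hLsum]
    _ = zeta1 (a + b) x + ∑' n : ℕ, (zeta1 a ((n : ℝ) + 1 + x) / ((n : ℂ) + 1 + x) ^ b
        + zeta1 b ((n : ℝ) + 1 + x) / ((n : ℂ) + 1 + x) ^ a) := by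
        rw [← Summable.tsum_add hgUsum hgLsum]
        congr 1
        exact tsum_congr fun n => by rw [hUeq n, hLeq n]
end

section
/- For real α with 1 < α < 2, the beta-function identity 2B(1−α, 2α−1) + B(1−α, 1−α) = 2(1 − cos(πα)) B(1−α, 2α−1) holds. -/
/-- The beta function `B(x,y) = Γ(x)Γ(y)/Γ(x+y)` (via the analytically continued Gamma). -/
noncomputable def cbeta (x y : ℂ) : ℂ := Complex.Gamma x * Complex.Gamma y / Complex.Gamma (x + y)

theorem beta_identity (α : ℝ) (h1 : 1 < α) (h2 : α < 2) :
    2 * cbeta (1 - (α : ℂ)) (2 * (α : ℂ) - 1) + cbeta (1 - (α : ℂ)) (1 - (α : ℂ)) =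
      2 * (1 - Complex.cos (Real.pi * α)) * cbeta (1 - (α : ℂ)) (2 * (α : ℂ) - 1) := by
  set a : ℂ := (α : ℂ) with ha
  have e1 : (1 - a) + (2 * a - 1) = a := by ring
  have e2 : (1 - a) + (1 - a) = 2 - 2 * a := by ring
  rw [cbeta, cbeta, e1, e2]
  set G1 := Complex.Gamma (1 - a)
  set G2 := Complex.Gamma (2 * a - 1)
  set Ga := Complex.Gamma a
  set G3 := Complex.Gamma (2 - 2 * a)
  have pc : (Real.pi : ℂ) * a = ((Real.pi * α : ℝ) : ℂ) := by push_cast; ring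
  suffices key : G1 * G1 / G3 =
      -2 * Complex.cos (Real.pi * α) * (G1 * G2 / Ga) by
    rw [key]; ring
  by_cases hh : α = 3/2
  · have : (2 : ℂ) - 2 * a = -(1 : ℕ) := by rw [ha, hh]; push_cast; ring
    have hG3 : G3 = 0 := by rw [show G3 = Complex.Gamma (2 - 2*a) from rfl, this,
      Complex.Gamma_neg_nat_eq_zero]
    have hc : Complex.cos (Real.pi * α) = 0 := by
      rw [hh, Complex.cos_eq_zero_iff]
      exact ⟨1, by push_cast; ring⟩
    rw [hG3, div_zero, hc]; ring
  · -- nonvanishing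
    have hαint : ∀ k : ℤ, (α : ℝ) ≠ k := by
      intro k hk
      have hk1 : (1 : ℝ) < (k : ℝ) := hk ▸ h1
      have hk2 : (k : ℝ) < 2 := hk ▸ h2
      have hk1' : (1 : ℤ) < k := by exact_mod_cast hk1
      have hk2' : k < 2 := by exact_mod_cast hk2
      omega
    have hG1 : G1 ≠ 0 := by
      apply Complex.Gamma_ne_zero
      intro m hm
      have : α = (m + 1 : ℤ) := by
        have := hm
        rw [ha] at this
        have h' : (1 : ℂ) - α = -(m : ℂ) := this
        have : ((1 - α : ℝ) : ℂ) = ((-(m:ℝ) : ℝ) : ℂ) := by push_cast; push_cast at h'; linear_combination h'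
        have := Complex.ofReal_injective this
        push_cast
        linarith
      exact hαint _ this
    have hGa : Ga ≠ 0 := Complex.Gamma_ne_zero_of_re_pos (by simp [ha]; linarith)
    have hG2 : G2 ≠ 0 := Complex.Gamma_ne_zero_of_re_pos (by simp [ha]; linarith)
    have hG3 : G3 ≠ 0 := by
      apply Complex.Gamma_ne_zero
      intro m hm
      have h' : ((2 - 2*α : ℝ) : ℂ) = ((-(m:ℝ) : ℝ) : ℂ) := by
        push_cast; rw [ha] at hm; push_cast at hm; linear_combination hm
      have h2' := Complex.ofReal_injective h'
      have hm1 : (0 : ℝ) < (m : ℝ) := by linarith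
      have hm2 : (m : ℝ) < 2 := by linarith
      have hm1' : 0 < m := by exact_mod_cast hm1
      have hm2' : m < 2 := by exact_mod_cast hm2
      have : m = 1 := by omega
      subst this
      exact hh (by push_cast at h2'; linarith)
    have R1 : Ga * G1 = (Real.pi : ℂ) / Complex.sin ((Real.pi : ℂ) * a) :=
      Complex.Gamma_mul_Gamma_one_sub a
    have R2 : G2 * G3 = (Real.pi : ℂ) / Complex.sin ((Real.pi : ℂ) * (2 * a - 1)) := by
      have := Complex.Gamma_mul_Gamma_one_sub (2 * a - 1)
      rwa [show (1 : ℂ) - (2 * a - 1) = 2 - 2 * a by ring] at this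
    set s := Complex.sin ((Real.pi : ℂ) * a) with hsdef
    set s' := Complex.sin ((Real.pi : ℂ) * (2 * a - 1)) with hs'def
    set c := Complex.cos ((Real.pi : ℂ) * a) with hcdef
    have hπ : (Real.pi : ℂ) ≠ 0 := by
      exact_mod_cast Real.pi_ne_zero
    have hs : s ≠ 0 := by
      rw [hsdef, Complex.sin_ne_zero_iff]
      intro k hk
      apply hαint k
      have h' : (Real.pi : ℂ) * a = (Real.pi : ℂ) * (k : ℂ) := by linear_combination hk
      have h'' := mul_left_cancel₀ hπ h'
      have : ((α : ℝ) : ℂ) = ((k : ℝ) : ℂ) := by push_cast; rw [← ha]; exact h''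
      exact_mod_cast this
    have hc : c ≠ 0 := by
      rw [hcdef, Complex.cos_ne_zero_iff]
      intro k hk
      apply hh
      have h' : (Real.pi : ℂ) * (2 * a) = (Real.pi : ℂ) * (2 * (k : ℂ) + 1) := by
        linear_combination 2 * hk
      have h'' := mul_left_cancel₀ hπ h'
      have h3 : ((2 * α : ℝ) : ℂ) = ((2 * (k : ℝ) + 1 : ℝ) : ℂ) := by
        push_cast; rw [← ha]; exact h''
      have hα : α = (2 * (k : ℝ) + 1) / 2 := by
        have := Complex.ofReal_injective h3; linarith
      have hk1 : (0 : ℤ) < k := by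
        have : (0 : ℝ) < (k : ℝ) := by rw [hα] at h1; push_cast at h1 ⊢; linarith
        exact_mod_cast this
      have hk2 : k < 2 := by
        have : ((k : ℝ)) < 2 := by rw [hα] at h2; push_cast at h2 ⊢; linarith
        exact_mod_cast this
      have : k = 1 := by omega
      rw [hα, this]; norm_num
    have S : s' = -2 * s * c := by
      rw [hs'def, hsdef, hcdef,
        show (Real.pi : ℂ) * (2 * a - 1) = 2 * ((Real.pi : ℂ) * a) - Real.pi by ring,
        Complex.sin_sub, Complex.sin_two_mul, Complex.cos_pi, Complex.sin_pi]
      ring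
    have hs' : s' ≠ 0 := by rw [S]; simp [hs, hc]
    have R1' : Ga * G1 * s = (Real.pi : ℂ) := by
      rw [R1]; field_simp
    have R2' : G2 * G3 * s' = (Real.pi : ℂ) := by
      rw [R2]; field_simp
    have key2 : G1 * G1 * Ga * (s * s') = -2 * c * (G1 * G2 * G3) * (s * s') := by
      linear_combination G1 * s' * R1' + 2 * c * s * G1 * R2' + G1 * (Real.pi : ℂ) * S
    have key3 : G1 * G1 * Ga = -2 * c * (G1 * G2 * G3) :=
      mul_right_cancel₀ (mul_ne_zero hs hs') key2
    field_simp
    apply mul_left_cancel₀ hG1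
    linear_combination key3
end

section
/- The limit as ε → 0⁺ of (1/2)(4π)^{−4+ε} Γ(1−ε/2)² [ ζ(2−ε)² + (1 − cos(πε)) B(3−2ε, −1+ε) ζ(3−2ε) ] equals 2^{−11}/9; in particular, (1 − cos(πε)) B(3−2ε, −1+ε) ζ(3−2ε) → 0 as ε → 0⁺. -/
open Filter Topology

private lemma coe_tendsto0 : Tendsto (fun ε : ℝ => (ε : ℂ)) (𝓝[>] 0) (𝓝 0) :=
  (Complex.continuous_ofReal.tendsto 0).mono_left nhdsWithin_le_nhds

private lemma pos_ne_neg_nat {a : ℝ} (ha : 0 < a) (m : ℕ) : (a : ℂ) ≠ -(m : ℂ) := by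
  intro h
  have h2 : a = -(m : ℝ) := by exact_mod_cast h
  have : (0:ℝ) ≤ (m:ℝ) := Nat.cast_nonneg m
  linarith

private lemma slope_lim :
    Tendsto (fun ε : ℝ => (1 - Complex.cos (Real.pi * ε)) / (ε : ℂ)) (𝓝[>] (0:ℝ)) (𝓝 0) := by
  have hd : HasDerivAt (fun x : ℝ => 1 - Complex.cos (Real.pi * x)) 0 0 := by
    have h1 : HasDerivAt (fun z : ℂ => 1 - Complex.cos (Real.pi * z))
        (Complex.sin (Real.pi * 0) * Real.pi) 0 := by
      have := ((Complex.hasDerivAt_cos ((Real.pi : ℂ) * 0)).comp 0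
        ((hasDerivAt_id (0:ℂ)).const_mul (Real.pi : ℂ)))
      simpa using this.const_sub 1
    simpa using h1.comp_ofReal
  have h2 := (hasDerivAt_iff_tendsto_slope.mp hd).mono_left (nhdsWithin_mono _ (fun x hx => by
    simp only [Set.mem_compl_iff, Set.mem_singleton_iff]
    exact ne_of_gt hx))
  refine h2.congr (fun ε => ?_)
  simp [slope, Complex.real_smul, div_eq_inv_mul]

private lemma gamma_tendsto {a : ℝ} (b : ℂ) (ha : 0 < a) :
    Tendsto (fun ε : ℝ => Complex.Gamma ((a : ℂ) + b * ε)) (𝓝[>] (0:ℝ))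
      (𝓝 (Complex.Gamma a)) := by
  have hc : ContinuousAt Complex.Gamma a :=
    (Complex.differentiableAt_Gamma a (pos_ne_neg_nat ha)).continuousAt
  have hl : Tendsto (fun ε : ℝ => (a : ℂ) + b * (ε : ℂ)) (𝓝[>] (0:ℝ)) (𝓝 a) := by
    simpa using (tendsto_const_nhds.add (coe_tendsto0.const_mul b))
  exact hc.tendsto.comp hl

private lemma zeta_tendsto {a : ℂ} (b : ℂ) (ha : a ≠ 1) :
    Tendsto (fun ε : ℝ => riemannZeta (a + b * ε)) (𝓝[>] (0:ℝ)) (𝓝 (riemannZeta a)) := by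
  have hc : ContinuousAt riemannZeta a := (differentiableAt_riemannZeta ha).continuousAt
  have hl : Tendsto (fun ε : ℝ => a + b * (ε : ℂ)) (𝓝[>] (0:ℝ)) (𝓝 a) := by
    simpa using (tendsto_const_nhds.add (coe_tendsto0.const_mul b))
  exact hc.tendsto.comp hl

private lemma part2_lim :
    Tendsto (fun ε : ℝ =>
        (1 - Complex.cos (Real.pi * ε)) * cbeta (3 - 2 * (ε : ℂ)) (-1 + (ε : ℂ))
          * riemannZeta (3 - 2 * (ε : ℂ)))
      (𝓝[>] (0 : ℝ)) (𝓝 0) := by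
  -- auxiliary limits
  have hG3 : Tendsto (fun ε : ℝ => Complex.Gamma (3 - 2 * (ε:ℂ))) (𝓝[>] (0:ℝ))
      (𝓝 (Complex.Gamma 3)) := by
    have := gamma_tendsto (a := 3) (-2) (by norm_num)
    refine this.congr (fun ε => ?_); push_cast; ring_nf
  have hG1 : Tendsto (fun ε : ℝ => Complex.Gamma (1 + (ε:ℂ))) (𝓝[>] (0:ℝ))
      (𝓝 (Complex.Gamma 1)) := by
    have := gamma_tendsto (a := 1) 1 (by norm_num)
    refine this.congr (fun ε => ?_); push_cast; ring_nf
  have hG2 : Tendsto (fun ε : ℝ => Complex.Gamma (2 - (ε:ℂ))) (𝓝[>] (0:ℝ))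
      (𝓝 (Complex.Gamma 2)) := by
    have := gamma_tendsto (a := 2) (-1) (by norm_num)
    refine this.congr (fun ε => ?_); push_cast; ring_nf
  have hZ : Tendsto (fun ε : ℝ => riemannZeta (3 - 2 * (ε:ℂ))) (𝓝[>] (0:ℝ))
      (𝓝 (riemannZeta 3)) := by
    have := zeta_tendsto (a := 3) (-2) (by norm_num)
    refine this.congr (fun ε => ?_); ring_nf
  have hden : Tendsto (fun ε : ℝ => (-1 + (ε:ℂ)) * Complex.Gamma (2 - (ε:ℂ))) (𝓝[>] (0:ℝ))
      (𝓝 ((-1) * Complex.Gamma 2)) := by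
    refine Tendsto.mul ?_ hG2
    simpa using (tendsto_const_nhds.add coe_tendsto0)
  -- the rewritten function
  have key : Tendsto (fun ε : ℝ =>
      ((1 - Complex.cos (Real.pi * ε)) / (ε : ℂ)) *
        (Complex.Gamma (3 - 2 * (ε:ℂ)) * Complex.Gamma (1 + (ε:ℂ)) /
          ((-1 + (ε:ℂ)) * Complex.Gamma (2 - (ε:ℂ)))) * riemannZeta (3 - 2 * (ε:ℂ)))
      (𝓝[>] (0:ℝ))
      (𝓝 (0 * (Complex.Gamma 3 * Complex.Gamma 1 / ((-1) * Complex.Gamma 2)) * riemannZeta 3)) :=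
    ((slope_lim.mul ((hG3.mul hG1).div hden (by
      have h2 : Complex.Gamma (2:ℂ) ≠ 0 := by
        apply Complex.Gamma_ne_zero
        intro m h
        have := congrArg Complex.re h
        simp at this
        linarith [Nat.cast_nonneg (α := ℝ) m]
      exact mul_ne_zero (by norm_num) h2))).mul hZ)
  rw [show (0 : ℂ) * (Complex.Gamma 3 * Complex.Gamma 1 / ((-1) * Complex.Gamma 2))
      * riemannZeta 3 = 0 by ring] at key
  -- eventual equality
  refine Tendsto.congr' ?_ key
  filter_upwards [Ioo_mem_nhdsGT_of_mem (by norm_num : (0:ℝ) ∈ Set.Ico 0 1)] with ε hε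
  obtain ⟨hε0, hε1⟩ := hε
  have hεC : (ε : ℂ) ≠ 0 := Complex.ofReal_ne_zero.mpr (ne_of_gt hε0)
  have hm1 : (-1 + (ε:ℂ)) ≠ 0 := by
    intro h
    have := congrArg Complex.re h
    simp at this
    linarith
  have hGm1 : Complex.Gamma (-1 + (ε:ℂ)) =
      Complex.Gamma (1 + (ε:ℂ)) / ((ε:ℂ) * (-1 + (ε:ℂ))) := by
    have e1 : Complex.Gamma ((-1 + (ε:ℂ)) + 1) = (-1 + (ε:ℂ)) * Complex.Gamma (-1 + (ε:ℂ)) :=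
      Complex.Gamma_add_one _ hm1
    have e2 : Complex.Gamma ((ε:ℂ) + 1) = (ε:ℂ) * Complex.Gamma (ε:ℂ) :=
      Complex.Gamma_add_one _ hεC
    have e3 : (-1 + (ε:ℂ)) + 1 = (ε:ℂ) := by ring
    rw [e3] at e1
    field_simp
    rw [show (1 + (ε:ℂ)) = (ε:ℂ) + 1 by ring, e2, e1]
    ring
  have hsum : (3 - 2 * (ε:ℂ)) + (-1 + (ε:ℂ)) = 2 - (ε:ℂ) := by ring
  have hG2ne : Complex.Gamma (2 - (ε:ℂ)) ≠ 0 := by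
    apply Complex.Gamma_ne_zero
    intro m h
    have hre := congrArg Complex.re h
    simp at hre
    have : (0:ℝ) ≤ (m:ℝ) := Nat.cast_nonneg m
    linarith
  rw [cbeta, hsum, hGm1]
  field_simp

theorem c1_limit :
    Tendsto (fun ε : ℝ =>
        (1 / 2 : ℂ) * (4 * (Real.pi : ℂ)) ^ (-4 + (ε : ℂ)) * (Complex.Gamma (1 - (ε : ℂ) / 2)) ^ 2 *
          ((riemannZeta (2 - (ε : ℂ))) ^ 2
            + (1 - Complex.cos (Real.pi * ε)) * cbeta (3 - 2 * (ε : ℂ)) (-1 + (ε : ℂ))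
                * riemannZeta (3 - 2 * (ε : ℂ))))
      (𝓝[>] (0 : ℝ)) (𝓝 ((2 : ℂ) ^ (-11 : ℤ) / 9)) ∧
    Tendsto (fun ε : ℝ =>
        (1 - Complex.cos (Real.pi * ε)) * cbeta (3 - 2 * (ε : ℂ)) (-1 + (ε : ℂ))
          * riemannZeta (3 - 2 * (ε : ℂ)))
      (𝓝[>] (0 : ℝ)) (𝓝 0) := by
  refine ⟨?_, part2_lim⟩
  have hπ : (Real.pi : ℂ) ≠ 0 := Complex.ofReal_ne_zero.mpr Real.pi_ne_zero
  have hC : Tendsto (fun ε : ℝ => (4 * (Real.pi : ℂ)) ^ (-4 + (ε : ℂ))) (𝓝[>] (0:ℝ))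
      (𝓝 ((4 * (Real.pi : ℂ)) ^ (-4 : ℂ))) := by
    have hb : (4 * (Real.pi : ℂ)) ≠ 0 := by
      exact mul_ne_zero (by norm_num) hπ
    have hl : Tendsto (fun ε : ℝ => (-4 : ℂ) + (ε : ℂ)) (𝓝[>] (0:ℝ)) (𝓝 (-4)) := by
      simpa using (tendsto_const_nhds.add coe_tendsto0)
    exact (continuousAt_const_cpow hb).tendsto.comp hl
  have hGam : Tendsto (fun ε : ℝ => Complex.Gamma (1 - (ε : ℂ) / 2)) (𝓝[>] (0:ℝ))
      (𝓝 (Complex.Gamma 1)) := by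
    have := gamma_tendsto (a := 1) (-(1/2)) (by norm_num)
    refine this.congr (fun ε => ?_)
    push_cast
    ring_nf
  have hZ2 : Tendsto (fun ε : ℝ => riemannZeta (2 - (ε : ℂ))) (𝓝[>] (0:ℝ))
      (𝓝 (riemannZeta 2)) := by
    have := zeta_tendsto (a := 2) (-1) (by norm_num)
    refine this.congr (fun ε => ?_)
    ring_nf
  have key := ((tendsto_const_nhds (x := (1/2 : ℂ))).mul hC |>.mul (hGam.pow 2)).mul
    ((hZ2.pow 2).add part2_lim)
  refine key.congr' (by rfl) |>.mono_right (le_of_eq ?_)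
  congr 1
  rw [Complex.Gamma_one, riemannZeta_two]
  rw [show (-4 : ℂ) = ((-4 : ℤ) : ℂ) by norm_num, Complex.cpow_intCast]
  rw [show ((-4 : ℤ)) = -(4:ℤ) by norm_num, zpow_neg]
  rw [show (4:ℤ) = ((4:ℕ):ℤ) by norm_num, zpow_natCast]
  field_simp
  ring_nf
end

section
/- For complex α with Re(α) > 1, Σ_{k=1}^∞ [Γ(α+k)/k!] {ζ(α+k) − 1} = Γ(α). -/
open scoped BigOperators
open Finset Filter Topology

noncomputable def poch (α : ℂ) (k : ℕ) : ℂ := ∏ j ∈ Finset.range k, (α + j)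

lemma poch_succ (α : ℂ) (k : ℕ) : poch α (k + 1) = poch α k * (α + k) := by
  simp [poch, Finset.prod_range_succ]

lemma iter_deriv (α : ℂ) (n : ℕ) : ∀ z : ℂ, z.re < 1 →
    iteratedDeriv n (fun w => (1 - w) ^ (-α) : ℂ → ℂ) z = poch α n * (1 - z) ^ (-α - n) := by
  induction n with
  | zero => intro z hz; simp [poch]
  | succ n ih =>
    intro z hz
    rw [iteratedDeriv_succ]
    have hopen : IsOpen {w : ℂ | w.re < 1} := isOpen_lt Complex.continuous_re continuous_const
    have hev : iteratedDeriv n (fun w => (1 - w) ^ (-α) : ℂ → ℂ) =ᶠ[nhds z]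
        fun w => poch α n * (1 - w) ^ (-α - n) := by
      filter_upwards [hopen.mem_nhds hz] with w hw using ih w hw
    rw [hev.deriv_eq]
    have h1 : HasDerivAt (fun w : ℂ => 1 - w) (-1) z := (hasDerivAt_id z).const_sub 1
    have hsp : (1 - z) ∈ Complex.slitPlane := by
      rw [Complex.mem_slitPlane_iff]
      left
      simp only [Complex.sub_re, Complex.one_re]
      linarith
    have h2 := (h1.cpow_const (c := -α - n) hsp).const_mul (poch α n)
    rw [h2.deriv]
    have hexp : -α - (n : ℂ) - 1 = -α - ((n : ℕ) + 1 : ℕ) := by push_cast; ring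
    rw [poch_succ, ← hexp]
    push_cast
    ring

lemma binom (α : ℂ) {x : ℂ} (hx : ‖x‖ < 1) :
    HasSum (fun k : ℕ => ((k.factorial : ℂ))⁻¹ * x ^ k * poch α k) ((1 - x) ^ (-α)) := by
  have hd : DifferentiableOn ℂ (fun w => (1 - w) ^ (-α) : ℂ → ℂ) (Metric.ball 0 1) := by
    intro w hw
    have hw1 : w.re < 1 := by
      have := Complex.abs_re_le_norm w
      have hn : ‖w‖ < 1 := by simpa [Metric.mem_ball] using hw
      cases abs_le.mp this with
      | intro h1 h2 => linarith
    have hsp : (1 - w) ∈ Complex.slitPlane := by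
      rw [Complex.mem_slitPlane_iff]
      left
      simp only [Complex.sub_re, Complex.one_re]
      linarith
    exact (((hasDerivAt_id w).const_sub 1).cpow_const hsp).differentiableAt.differentiableWithinAt
  have H := Complex.hasSum_taylorSeries_on_ball hd (by simpa [Metric.mem_ball] using hx)
  have Hc : ∀ n : ℕ, (n.factorial : ℂ)⁻¹ • (x - 0) ^ n •
      iteratedDeriv n (fun w => (1 - w) ^ (-α) : ℂ → ℂ) 0
      = (n.factorial : ℂ)⁻¹ * x ^ n * poch α n := by
    intro n
    rw [iter_deriv α n 0 (by norm_num)]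
    simp [smul_eq_mul]
    ring
  exact H.congr_fun fun n => (Hc n).symm

lemma gamma_poch (α : ℂ) (hα : 0 < α.re) (m : ℕ) :
    Complex.Gamma (α + m) = Complex.Gamma α * poch α m := by
  induction m with
  | zero => simp [poch]
  | succ m ih =>
    have hne : α + m ≠ 0 := by
      intro h
      have : (α + m).re = 0 := by rw [h]; simp
      simp only [Complex.add_re, Complex.natCast_re] at this
      have : (0:ℝ) ≤ (m:ℝ) := Nat.cast_nonneg m
      linarith [Complex.add_re α m ▸ (by simp : (α + (m:ℂ)).re = α.re + m)]
    have : α + ((m:ℕ) + 1 : ℕ) = (α + m) + 1 := by push_cast; ring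
    rw [this, Complex.Gamma_add_one _ hne, ih, poch_succ]
    ring

lemma zeta_tail {s : ℂ} (hs : 1 < s.re) :
    HasSum (fun n : ℕ => ((n : ℂ) + 2) ^ (-s)) (riemannZeta s - 1) := by
  have hsum : Summable (fun n : ℕ => 1 / (n : ℂ) ^ s) :=
    Complex.summable_one_div_nat_cpow.mpr hs
  have hz : HasSum (fun n : ℕ => 1 / (n : ℂ) ^ s) (riemannZeta s) := by
    rw [zeta_eq_tsum_one_div_nat_cpow hs]
    exact hsum.hasSum
  have h2 := (hasSum_nat_add_iff' 2).2 hz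
  have hs0 : s ≠ 0 := by
    intro h; rw [h] at hs; simp at hs; linarith
  have hr : ∑ i ∈ Finset.range 2, 1 / (i : ℂ) ^ s = 1 := by
    rw [Finset.sum_range_succ, Finset.sum_range_one]
    simp [Complex.zero_cpow hs0]
  rw [hr] at h2
  refine h2.congr_fun fun n => ?_
  rw [Complex.cpow_neg, one_div]
  congr 2
  push_cast
  ring

lemma col_sum (α : ℂ) (hα : 1 < α.re) (n : ℕ) :
    HasSum (fun k : ℕ => Complex.Gamma α * poch α (k + 1) / ((k + 1).factorial : ℂ) *
        ((n : ℂ) + 2) ^ (-(α + k + 1)))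
      (Complex.Gamma α * (((n : ℂ) + 1) ^ (-α) - ((n : ℂ) + 2) ^ (-α))) := by
  set N : ℂ := (n : ℂ) + 2 with hN
  have hNpos : (0 : ℝ) < (n : ℝ) + 2 := by positivity
  have hNr : N = (((n : ℝ) + 2 : ℝ) : ℂ) := by push_cast [hN]; ring
  have hNne : N ≠ 0 := by
    rw [hNr]
    exact_mod_cast Complex.ofReal_ne_zero.mpr (ne_of_gt hNpos)
  have hxnorm : ‖N⁻¹‖ < 1 := by
    rw [norm_inv, hNr]
    rw [Complex.norm_real]
    rw [Real.norm_of_nonneg (le_of_lt hNpos)]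
    rw [inv_lt_one_iff₀]
    right; linarith
  have hb := binom α hxnorm
  have h1 := (hasSum_nat_add_iff' 1).2 hb
  have hr1 : ∑ i ∈ Finset.range 1, ((i.factorial : ℂ))⁻¹ * N⁻¹ ^ i * poch α i = 1 := by
    simp [poch]
  rw [hr1] at h1
  have h2 := h1.mul_left (Complex.Gamma α * N ^ (-α))
  have hkey : N ^ (-α) * (1 - N⁻¹) ^ (-α) = ((n : ℂ) + 1) ^ (-α) := by
    have hfrac : ((((n : ℝ) + 1) / ((n : ℝ) + 2) : ℝ) : ℂ) = 1 - N⁻¹ := by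
      rw [hNr]
      push_cast
      have h2ne : ((n : ℂ) + 2) ≠ 0 := by rw [hNr] at hNne; exact_mod_cast hNne
      rw [div_eq_iff h2ne, sub_mul, inv_mul_cancel₀ h2ne]
      ring
    have := Complex.mul_cpow_ofReal_nonneg
      (by positivity : (0:ℝ) ≤ ((n : ℝ) + 1) / ((n : ℝ) + 2))
      (by positivity : (0:ℝ) ≤ (n : ℝ) + 2) (-α)
    have hbase : ((((n : ℝ) + 1) / ((n : ℝ) + 2) : ℝ) : ℂ) * (((n : ℝ) + 2 : ℝ) : ℂ) = (n : ℂ) + 1 := by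
      push_cast
      have h2ne : ((n : ℂ) + 2) ≠ 0 := by rw [hNr] at hNne; exact_mod_cast hNne
      field_simp
    rw [hbase, hfrac] at this
    rw [this, ← hNr]
    ring
  have hval : Complex.Gamma α * N ^ (-α) * ((1 - N⁻¹) ^ (-α) - 1)
      = Complex.Gamma α * (((n : ℂ) + 1) ^ (-α) - N ^ (-α)) := by
    rw [mul_sub, mul_sub]
    rw [mul_assoc (Complex.Gamma α), hkey]
    ring
  rw [hval] at h2
  refine h2.congr_fun fun k => ?_
  have hpow : N ^ (-(α + k + 1)) = N ^ (-α) * N⁻¹ ^ (k + 1) := by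
    have : -(α + (k:ℂ) + 1) = -α + -(((k + 1 : ℕ) : ℂ)) := by push_cast; ring
    rw [this, Complex.cpow_add _ _ hNne]
    congr 1
    rw [Complex.cpow_neg, Complex.cpow_natCast, inv_pow]
  rw [hpow]
  ring

lemma poch_norm_le (α : ℂ) (k : ℕ) :
    ‖poch α k‖ ≤ ∏ j ∈ Finset.range k, (‖α‖ + j) := by
  rw [poch, norm_prod]
  refine Finset.prod_le_prod (fun j _ => norm_nonneg _) fun j _ => ?_
  calc ‖α + (j : ℂ)‖ ≤ ‖α‖ + ‖(j : ℂ)‖ := norm_add_le _ _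
    _ = ‖α‖ + j := by rw [Complex.norm_natCast]

lemma summable_qhalf (a : ℝ) :
    Summable (fun k : ℕ => ((k.factorial : ℝ))⁻¹ * (1/2)^k * ∏ j ∈ Finset.range k, (a + j)) := by
  have hb := binom (a : ℂ) (x := (1/2 : ℂ)) (by norm_num)
  have hs := hb.summable
  rw [← Complex.summable_ofReal]
  refine hs.congr fun k => ?_
  rw [poch]
  push_cast
  rfl

set_option maxHeartbeats 1000000 in
/-- `∑_{k=1}^∞ [Γ(α+k)/k!] (ζ(α+k)-1) = Γ(α)` for `Re α > 1` (the sum over `k ≥ 1` is written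
with index shifted by 1). -/
theorem gamma_zeta_sum (α : ℂ) (hα : 1 < α.re) :
    HasSum (fun k : ℕ =>
        Complex.Gamma (α + k + 1) / ((k + 1).factorial : ℂ) * (riemannZeta (α + k + 1) - 1))
      (Complex.Gamma α) := by
  have hσ : 1 < α.re := hα
  set σ : ℝ := α.re with hσdef
  set F : ℕ × ℕ → ℂ := fun p => Complex.Gamma α * poch α (p.1 + 1) / ((p.1 + 1).factorial : ℂ) *
      ((p.2 : ℂ) + 2) ^ (-(α + p.1 + 1)) with hFdef
  set C : ℝ := ‖Complex.Gamma α‖ with hCdef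
  set g₁ : ℕ → ℝ := fun k => C * (((k + 1).factorial : ℝ))⁻¹ * (1/2)^k *
      ∏ j ∈ Finset.range (k + 1), (‖α‖ + j) with hg1def
  set g₂ : ℕ → ℝ := fun n => ((n : ℝ) + 2) ^ (-(σ + 1)) with hg2def
  -- summability of g₁
  have g1sum : Summable g₁ := by
    have ht := summable_qhalf ‖α‖
    have ht1 := (summable_nat_add_iff 1).2 ht
    have := ht1.mul_left (2 * C)
    refine this.congr fun k => ?_
    simp only [hg1def]
    push_cast
    ring
  -- summability of g₂
  have g2sum : Summable g₂ := by
    have hbase : Summable (fun n : ℕ => (n : ℝ) ^ (-(σ + 1))) :=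
      Real.summable_nat_rpow.mpr (by linarith)
    have := (summable_nat_add_iff 2).2 hbase
    refine this.congr fun n => ?_
    simp only [hg2def]
    push_cast
    ring_nf
  -- norm bound
  have hbound : ∀ p : ℕ × ℕ, ‖F p‖ ≤ g₁ p.1 * g₂ p.2 := by
    rintro ⟨k, n⟩
    have hnpos : (0 : ℝ) < (n : ℝ) + 2 := by positivity
    have hnorm : ‖F (k, n)‖ = C * ‖poch α (k + 1)‖ * (((k + 1).factorial : ℝ))⁻¹ *
        ((n : ℝ) + 2) ^ (-(σ + (k : ℝ) + 1)) := by
      have hb : ((n : ℂ) + 2) = ((((n : ℝ) + 2) : ℝ) : ℂ) := by push_cast; ring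
      simp only [hFdef]
      rw [norm_mul, norm_div, norm_mul, hb,
        Complex.norm_cpow_eq_rpow_re_of_pos hnpos]
      have : (-(α + (k : ℂ) + 1)).re = -(σ + (k : ℝ) + 1) := by
        simp [Complex.add_re, hσdef]
      rw [this]
      rw [Complex.norm_natCast, hCdef, div_eq_mul_inv]
    rw [hnorm]
    have hsplit : ((n : ℝ) + 2) ^ (-(σ + (k : ℝ) + 1)) =
        ((n : ℝ) + 2) ^ (-(σ + 1)) * ((n : ℝ) + 2) ^ (-(k : ℝ)) := by
      rw [← Real.rpow_add hnpos]
      congr 1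
      ring
    have hle2 : ((n : ℝ) + 2) ^ (-(k : ℝ)) ≤ (1/2)^k := by
      rw [Real.rpow_neg (le_of_lt hnpos), Real.rpow_natCast, ← inv_pow]
      refine pow_le_pow_left₀ (by positivity) ?_ k
      rw [one_div]
      refine inv_anti₀ (by norm_num) (by push_cast; linarith)
    have hq := poch_norm_le α (k + 1)
    have hqnn : (0:ℝ) ≤ ∏ j ∈ Finset.range (k + 1), (‖α‖ + j) :=
      Finset.prod_nonneg fun j _ => by positivity
    calc C * ‖poch α (k + 1)‖ * (((k + 1).factorial : ℝ))⁻¹ *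
          ((n : ℝ) + 2) ^ (-(σ + (k : ℝ) + 1))
        = C * ‖poch α (k + 1)‖ * (((k + 1).factorial : ℝ))⁻¹ *
          (((n : ℝ) + 2) ^ (-(σ + 1)) * ((n : ℝ) + 2) ^ (-(k : ℝ))) := by rw [hsplit]
      _ ≤ C * (∏ j ∈ Finset.range (k + 1), (‖α‖ + j)) * (((k + 1).factorial : ℝ))⁻¹ *
          (((n : ℝ) + 2) ^ (-(σ + 1)) * (1/2)^k) := by
          gcongr
      _ = g₁ k * g₂ n := by simp only [hg1def, hg2def]; ring
  -- summability of F
  have hgsum : Summable (fun p : ℕ × ℕ => g₁ p.1 * g₂ p.2) :=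
    g1sum.mul_of_nonneg g2sum (fun k => by positivity)
      (fun n => by simp only [hg2def]; positivity)
  have hFsum : Summable F := Summable.of_norm_bounded hgsum hbound
  have hFhas : HasSum F (∑' p, F p) := hFsum.hasSum
  -- row sums
  have hrow : ∀ k : ℕ, HasSum (fun n => F (k, n))
      (Complex.Gamma α * poch α (k + 1) / ((k + 1).factorial : ℂ) *
        (riemannZeta (α + k + 1) - 1)) := by
    intro k
    have hre : 1 < (α + k + 1).re := by
      simp only [Complex.add_re, Complex.natCast_re, Complex.one_re]
      have : (0:ℝ) ≤ (k : ℝ) := Nat.cast_nonneg k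
      linarith
    exact (zeta_tail hre).mul_left _
  -- column sums
  have hcol : ∀ n : ℕ, HasSum (fun k => F (k, n))
      (Complex.Gamma α * (((n : ℂ) + 1) ^ (-α) - ((n : ℂ) + 2) ^ (-α))) :=
    fun n => col_sum α hα n
  -- swap
  have hswap : HasSum (fun p : ℕ × ℕ => F (p.2, p.1)) (∑' p, F p) :=
    ((Equiv.prodComm ℕ ℕ).hasSum_iff).2 hFhas
  have hcols : HasSum (fun n : ℕ => Complex.Gamma α *
      (((n : ℂ) + 1) ^ (-α) - ((n : ℂ) + 2) ^ (-α))) (∑' p, F p) :=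
    hswap.prod_fiberwise fun n => hcol n
  -- telescoping: identify ∑' p, F p = Γ α
  set g : ℕ → ℂ := fun n => Complex.Gamma α * ((n : ℂ) + 1) ^ (-α) with hgdef
  have hps : ∀ m : ℕ, ∑ i ∈ Finset.range m, (Complex.Gamma α *
      (((i : ℂ) + 1) ^ (-α) - ((i : ℂ) + 2) ^ (-α))) = g 0 - g m := by
    intro m
    rw [← Finset.sum_range_sub' g m]
    refine Finset.sum_congr rfl fun i _ => ?_
    simp only [hgdef]
    push_cast
    ring_nf
  have hgtend : Tendsto g atTop (nhds 0) := by
    rw [tendsto_zero_iff_norm_tendsto_zero]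
    have hnorm : ∀ n : ℕ, ‖g n‖ = C * ((n : ℝ) + 1) ^ (-σ) := by
      intro n
      have hb : ((n : ℂ) + 1) = ((((n : ℝ) + 1) : ℝ) : ℂ) := by push_cast; ring
      simp only [hgdef]
      rw [norm_mul, hb,
        Complex.norm_cpow_eq_rpow_re_of_pos (by positivity), Complex.neg_re]
    have htail : Tendsto (fun n : ℕ => ((n : ℝ) + 1) ^ (-σ)) atTop (nhds 0) := by
      refine (tendsto_rpow_neg_atTop (by linarith : (0:ℝ) < σ)).comp ?_
      exact tendsto_atTop_add_const_right atTop 1 tendsto_natCast_atTop_atTop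
    have := htail.const_mul C
    rw [mul_zero] at this
    exact (funext hnorm : (fun n => ‖g n‖) = _) ▸ this
  have h1 := hcols.tendsto_sum_nat
  have h2 : Tendsto (fun m : ℕ => g 0 - g m) atTop (nhds (g 0 - 0)) :=
    tendsto_const_nhds.sub hgtend
  have hps' : (fun m : ℕ => ∑ i ∈ Finset.range m, (Complex.Gamma α *
      (((i : ℂ) + 1) ^ (-α) - ((i : ℂ) + 2) ^ (-α)))) = fun m => g 0 - g m := funext hps
  rw [hps'] at h1
  have hS : ∑' p, F p = g 0 - 0 := tendsto_nhds_unique h1 h2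
  have hg0 : g 0 - 0 = Complex.Gamma α := by
    simp only [hgdef]
    norm_num [Complex.one_cpow]
  -- rows give the result
  have hrows : HasSum (fun k : ℕ => Complex.Gamma α * poch α (k + 1) /
      ((k + 1).factorial : ℂ) * (riemannZeta (α + k + 1) - 1)) (∑' p, F p) :=
    hFhas.prod_fiberwise hrow
  rw [hS, hg0] at hrows
  refine hrows.congr_fun fun k => ?_
  have hgam : Complex.Gamma (α + k + 1) = Complex.Gamma α * poch α (k + 1) := by
    have h0 : 0 < α.re := by linarith
    have := gamma_poch α h0 (k + 1)
    rw [← this]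
    congr 1
    push_cast
    ring
  rw [hgam]
end

section
/- For complex α with Re(α) > 1, Σ_{k=1}^∞ [Γ(α+k)/k!] ζ′(α+k) = Γ(α) ψ(α) ζ(α) − Σ_{k=0}^∞ [Γ(α+k)/k!] ψ(α+k) {ζ(α+k) − 1}, where both series converge absolutely. -/
open scoped BigOperators

open Set MeasureTheory Filter Metric

lemma aux_summable_gamma_pow {c x : ℝ} (hc : 0 < c) (hx0 : 0 < x) (hx1 : x < 1) :
    Summable (fun k : ℕ => Real.Gamma (c + k) / k.factorial * x ^ k) := by
  have hpos : ∀ k : ℕ, 0 < Real.Gamma (c + k) / k.factorial * x ^ k := by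
    intro k
    have h1 : (0:ℝ) < c + k := by positivity
    have h2 := Real.Gamma_pos_of_pos h1
    positivity
  apply summable_of_ratio_test_tendsto_lt_one hx1
  · filter_upwards with k using (hpos k).ne'
  · have key : ∀ k : ℕ, ‖Real.Gamma (c + ↑(k+1)) / (k+1).factorial * x ^ (k+1)‖ /
        ‖Real.Gamma (c + k) / k.factorial * x ^ k‖ = (c + k) / (k + 1) * x := by
      intro k
      have h1 : (0:ℝ) < c + k := by positivity
      have h2 := Real.Gamma_pos_of_pos h1
      have hg : Real.Gamma (c + ↑(k+1)) = (c + k) * Real.Gamma (c + k) := by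
        rw [show c + ↑(k+1) = (c + k) + 1 by push_cast; ring, Real.Gamma_add_one h1.ne']
      rw [Real.norm_of_nonneg (hpos _).le, Real.norm_of_nonneg (hpos k).le, hg,
        Nat.factorial_succ]
      have hk : (0:ℝ) < (k.factorial : ℝ) := by positivity
      field_simp
      push_cast
      ring
    simp_rw [key]
    have h0 : Filter.Tendsto (fun k : ℕ => (c + k) / (k + 1)) atTop (nhds 1) := by
      have : (fun k : ℕ => (c + k) / (k + 1)) = fun k : ℕ => (c - 1) * (1 / (k + 1)) + 1 := by
        funext k
        have : ((k:ℝ) + 1) ≠ 0 := by positivity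
        field_simp
        ring
      rw [this]
      have := (tendsto_one_div_add_atTop_nhds_zero_nat.const_mul (c - 1)).add_const 1
      simpa using this
    simpa using h0.mul_const x

lemma aux_gamma_mono {x y : ℝ} (hx : 1 ≤ x) (hxy : x ≤ y) :
    Real.Gamma x ≤ Real.Gamma (y + 2) := by
  have hx0 : (0:ℝ) < x := by linarith
  have h1 : Real.Gamma x ≤ Real.Gamma (x + 2) := by
    have h2 : Real.Gamma (x + 2) = (x + 1) * (x * Real.Gamma x) := by
      rw [show x + 2 = (x + 1) + 1 by ring, Real.Gamma_add_one (by linarith),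
        Real.Gamma_add_one hx0.ne']
    rw [h2]
    have hG := Real.Gamma_pos_of_pos hx0
    nlinarith [hG, mul_nonneg (sub_nonneg.2 hx) hG.le,
      mul_nonneg (mul_nonneg hx0.le (sub_nonneg.2 hx)) hG.le]
  refine h1.trans ?_
  rcases eq_or_lt_of_le hxy with h | h
  · rw [h]
  · exact (Real.Gamma_strictMonoOn_Ici (by simp; linarith) (by simp; linarith)
      (by linarith)).le

/-- `|Γ(z)| ≤ Γ(Re z)` for `Re z > 0`. -/
lemma aux_abs_gamma_le {z : ℂ} (hz : 0 < z.re) :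
    ‖Complex.Gamma z‖ ≤ Real.Gamma z.re := by
  rw [Complex.Gamma_eq_integral hz, Real.Gamma_eq_integral hz]
  rw [Complex.GammaIntegral]
  refine (norm_integral_le_integral_norm _).trans_eq ?_
  refine setIntegral_congr_fun measurableSet_Ioi (fun t ht ↦ ?_)
  rw [mem_Ioi] at ht
  rw [norm_mul, Complex.norm_real,
    Complex.norm_cpow_eq_rpow_re_of_pos ht]
  simp [abs_of_nonneg (Real.exp_nonneg _), Complex.sub_re, Real.exp_nonneg]

lemma aux_tail_summable {a : ℝ} (ha : 1 < a) :
    Summable (fun n : ℕ => ((n : ℝ) + 2) ^ (-a)) := by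
  have h := (summable_nat_add_iff (f := fun n : ℕ => (n : ℝ) ^ (-a)) 2).2
    (Real.summable_nat_rpow.2 (by linarith))
  refine h.congr fun n => ?_
  push_cast
  ring_nf

lemma aux_tail_le {a σ : ℝ} (ha : 1 < a) (h : a ≤ σ) :
    (∑' n : ℕ, ((n : ℝ) + 2) ^ (-σ)) ≤ 2 ^ (a - σ) * ∑' n : ℕ, ((n : ℝ) + 2) ^ (-a) := by
  rw [← tsum_mul_left]
  refine Summable.tsum_le_tsum (fun n => ?_) (aux_tail_summable (by linarith)) ?_
  · have hn : (0:ℝ) < (n : ℝ) + 2 := by positivity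
    have heq : ((n : ℝ) + 2) ^ (-σ) = ((n : ℝ) + 2) ^ (a - σ) * ((n : ℝ) + 2) ^ (-a) := by
      rw [← Real.rpow_add hn]; ring_nf
    rw [heq]
    have h2 : ((n : ℝ) + 2) ^ (a - σ) ≤ 2 ^ (a - σ) :=
      Real.rpow_le_rpow_of_nonpos (by norm_num)
        (by linarith [Nat.cast_nonneg (α := ℝ) n]) (by linarith)
    have h3 : (0:ℝ) ≤ ((n : ℝ) + 2) ^ (-a) := (Real.rpow_pos_of_pos hn _).le
    nlinarith [Real.rpow_pos_of_pos hn (a - σ)]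
  · exact (aux_tail_summable ha).mul_left _

lemma aux_norm_cpow (n : ℕ) {s : ℂ} :
    ‖((n : ℂ) + 2) ^ (-s)‖ = ((n : ℝ) + 2) ^ (-s.re) := by
  have hn : (0:ℝ) < (n : ℝ) + 2 := by positivity
  rw [show ((n : ℂ) + 2) = (((n : ℝ) + 2 : ℝ) : ℂ) by push_cast; ring,
    Complex.norm_cpow_eq_rpow_re_of_pos hn, Complex.neg_re]

lemma aux_zeta_summable {s : ℂ} (hs : 1 < s.re) :
    Summable (fun n : ℕ => ((n : ℂ) + 2) ^ (-s)) := by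
  refine Summable.of_norm ?_
  exact (aux_tail_summable hs).congr fun n => (aux_norm_cpow n).symm

lemma aux_zeta_repr {s : ℂ} (hs : 1 < s.re) :
    riemannZeta s - 1 = ∑' n : ℕ, ((n : ℂ) + 2) ^ (-s) := by
  have hsum : Summable (fun n : ℕ => 1 / ((n : ℂ) + 1) ^ s) := by
    refine Summable.of_norm ?_
    have h := (summable_nat_add_iff (f := fun n : ℕ => (n : ℝ) ^ (-s.re)) 1).2
      (Real.summable_nat_rpow.2 (by linarith))
    refine h.congr fun n => ?_
    have hn : (0:ℝ) < (n : ℝ) + 1 := by positivity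
    rw [norm_div, norm_one,
      show ((n : ℂ) + 1) = (((n : ℝ) + 1 : ℝ) : ℂ) by push_cast; ring,
      Complex.norm_cpow_eq_rpow_re_of_pos hn, one_div, ← Real.rpow_neg hn.le]
    push_cast
    ring_nf
  rw [zeta_eq_tsum_one_div_nat_add_one_cpow hs, Summable.tsum_eq_zero_add hsum]
  have h0 : 1 / ((0 : ℕ) : ℂ) + 1 = 1 := by norm_num
  have : (1 : ℂ) / (((0 : ℕ) : ℂ) + 1) ^ s = 1 := by norm_num
  rw [this, add_sub_cancel_left]
  refine tsum_congr fun n => ?_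
  rw [Complex.cpow_neg, one_div]
  push_cast
  ring_nf

lemma aux_binomial {s : ℂ} (hs : 0 < s.re) {x : ℝ} (hx0 : 0 < x) (hx1 : x < 1) :
    ∑' k : ℕ, Complex.Gamma (s + k) / (k.factorial : ℂ) * (x : ℂ) ^ k
      = ((1 - x : ℝ) : ℂ) ^ (-s) * Complex.Gamma s := by
  set f : ℕ → ℝ → ℂ := fun k t =>
    (x : ℂ) ^ k / (k.factorial : ℂ) * ((t : ℂ) ^ (s + k - 1) * Complex.exp (-t)) with hf
  have hre : ∀ k : ℕ, 0 < (s + k).re := by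
    intro k; simp only [Complex.add_re, Complex.natCast_re]; positivity
  -- each term as an integral
  have hterm : ∀ k : ℕ, Complex.Gamma (s + k) / (k.factorial : ℂ) * (x : ℂ) ^ k
      = ∫ t in Ioi (0:ℝ), f k t := by
    intro k
    have h1 := Complex.integral_cpow_mul_exp_neg_mul_Ioi (hre k) one_pos
    simp only [Complex.ofReal_one, one_mul, ne_eq, one_ne_zero, not_false_eq_true,
      div_self, Complex.one_cpow] at h1
    rw [hf]
    simp only []
    rw [MeasureTheory.integral_const_mul _ _, h1]
    ring
  -- measurability
  have hmeas : ∀ k : ℕ, AEStronglyMeasurable (f k) (volume.restrict (Ioi (0:ℝ))) := by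
    intro k
    refine (ContinuousOn.aestronglyMeasurable ?_ measurableSet_Ioi)
    refine ContinuousOn.mul continuousOn_const (ContinuousOn.mul ?_ ?_)
    · intro t ht
      exact (Complex.continuousAt_ofReal_cpow_const t _ (Or.inr (ne_of_gt ht))).continuousWithinAt
    · exact (Complex.continuous_exp.comp (continuous_neg.comp Complex.continuous_ofReal)).continuousOn
  -- norm of f k t on Ioi 0
  have hnorm : ∀ k : ℕ, ∀ t : ℝ, t ∈ Ioi (0:ℝ) →
      ‖f k t‖ = x ^ k / k.factorial * (Real.exp (-t) * t ^ (s.re + k - 1)) := by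
    intro k t ht
    rw [mem_Ioi] at ht
    rw [hf]
    simp only []
    rw [norm_mul, norm_mul, norm_div]
    simp only [norm_pow, map_pow, Complex.norm_real, Real.norm_eq_abs, Complex.norm_natCast,
      Complex.norm_cpow_eq_rpow_re_of_pos ht, Complex.norm_exp, Complex.neg_re,
      Complex.ofReal_re, Complex.sub_re, Complex.add_re, Complex.natCast_re, Complex.one_re,
      abs_of_pos hx0]
    ring
  -- the real majorant is integrable with integral Gamma-value
  have hint : ∀ k : ℕ, IntegrableOn
      (fun t : ℝ => x ^ k / k.factorial * (Real.exp (-t) * t ^ (s.re + k - 1))) (Ioi 0) := by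
    intro k
    exact (Real.GammaIntegral_convergent (by positivity : (0:ℝ) < s.re + k)).const_mul _
  have hintval : ∀ k : ℕ, ∫ t in Ioi (0:ℝ),
      x ^ k / k.factorial * (Real.exp (-t) * t ^ (s.re + k - 1))
        = x ^ k / k.factorial * Real.Gamma (s.re + k) := by
    intro k
    rw [MeasureTheory.integral_const_mul _ _, ← Real.Gamma_eq_integral (by positivity)]
  -- lintegral bound
  have hlint : ∑' k : ℕ, ∫⁻ t in Ioi (0:ℝ), ‖f k t‖₊ ≠ ⊤ := by
    have heq : ∀ k : ℕ, ∫⁻ t in Ioi (0:ℝ), (‖f k t‖₊ : ENNReal)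
        = ENNReal.ofReal (x ^ k / k.factorial * Real.Gamma (s.re + k)) := by
      intro k
      rw [← hintval k, MeasureTheory.ofReal_integral_eq_lintegral_ofReal (hint k)
        (by
          filter_upwards [MeasureTheory.ae_restrict_mem measurableSet_Ioi] with t ht
          have : (0:ℝ) < t := ht
          positivity)]
      refine lintegral_congr_ae ?_
      filter_upwards [MeasureTheory.ae_restrict_mem measurableSet_Ioi] with t ht
      rw [← hnorm k t ht]
      exact (ofReal_norm (f k t)).symm
    simp_rw [heq]
    rw [← ENNReal.ofReal_tsum_of_nonneg (fun k => by
        have := Real.Gamma_pos_of_pos (by positivity : (0:ℝ) < s.re + k)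
        positivity)
      (((aux_summable_gamma_pow hs hx0 hx1).mul_left 1).congr (fun k => by ring))]
    exact ENNReal.ofReal_ne_top
  -- swap sum and integral
  have hswap : ∑' k : ℕ, ∫ t in Ioi (0:ℝ), f k t = ∫ t in Ioi (0:ℝ), ∑' k : ℕ, f k t :=
    (MeasureTheory.integral_tsum hmeas hlint).symm
  -- pointwise sum
  have hpt : ∀ t ∈ Ioi (0:ℝ), ∑' k : ℕ, f k t
      = (t : ℂ) ^ (s - 1) * Complex.exp (-(((1 - x : ℝ) : ℂ) * t)) := by
    intro t ht
    rw [mem_Ioi] at ht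
    have htne : (t : ℂ) ≠ 0 := Complex.ofReal_ne_zero.2 ht.ne'
    have h1 : ∀ k : ℕ, f k t
        = (t : ℂ) ^ (s - 1) * Complex.exp (-t) * (((x : ℂ) * t) ^ k / (k.factorial : ℂ)) := by
      intro k
      rw [hf]
      simp only []
      rw [show s + (k:ℂ) - 1 = (s - 1) + (k:ℕ) by push_cast; ring,
        Complex.cpow_add _ _ htne, Complex.cpow_natCast, mul_pow]
      ring
    simp_rw [h1]
    rw [tsum_mul_left]
    have : ∑' k : ℕ, ((x : ℂ) * t) ^ k / (k.factorial : ℂ) = Complex.exp ((x:ℂ) * t) := by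
      rw [Complex.exp_eq_exp_ℂ, NormedSpace.exp_eq_tsum_div]
    rw [this, mul_assoc, ← Complex.exp_add]
    congr 2
    push_cast
    ring
  rw [funext hterm, hswap,
    MeasureTheory.setIntegral_congr_fun measurableSet_Ioi hpt,
    Complex.integral_cpow_mul_exp_neg_mul_Ioi hs (by linarith : (0:ℝ) < 1 - x)]
  congr 1
  rw [Complex.cpow_neg, ← Complex.cpow_neg]
  rw [show (1 / ((1 - x : ℝ) : ℂ)) = (((1 - x : ℝ)) : ℂ)⁻¹ by ring]
  rw [Complex.inv_cpow _ _ (by rw [Complex.arg_ofReal_of_nonneg (by linarith)]; exact Real.pi_ne_zero.symm)]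
  rw [Complex.cpow_neg]

lemma aux_inner {s : ℂ} (hs : 0 < s.re) (n : ℕ) :
    ∑' k : ℕ, Complex.Gamma (s + k) / (k.factorial : ℂ) * ((n : ℂ) + 2) ^ (-(s + k))
      = Complex.Gamma s * ((n : ℂ) + 1) ^ (-s) := by
  have hB : ((n : ℂ) + 2) = (((n : ℝ) + 2 : ℝ) : ℂ) := by push_cast; ring
  have hBpos : (0:ℝ) < (n : ℝ) + 2 := by positivity
  have hBne : ((n : ℂ) + 2) ≠ 0 := by rw [hB]; exact_mod_cast Complex.ofReal_ne_zero.2 hBpos.ne'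
  set x : ℝ := ((n : ℝ) + 2)⁻¹ with hx
  have hx0 : 0 < x := by positivity
  have hx1 : x < 1 := by
    rw [hx]
    rw [inv_lt_one_iff₀]
    right; linarith [Nat.cast_nonneg (α := ℝ) n]
  have hterm : ∀ k : ℕ, Complex.Gamma (s + k) / (k.factorial : ℂ) * ((n : ℂ) + 2) ^ (-(s + k))
      = ((n : ℂ) + 2) ^ (-s) * (Complex.Gamma (s + k) / (k.factorial : ℂ) * (x : ℂ) ^ k) := by
    intro k
    have h1 : ((n : ℂ) + 2) ^ (-(s + (k:ℂ))) = ((n : ℂ) + 2) ^ (-s) * ((n : ℂ) + 2) ^ (-(k:ℂ)) := by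
      rw [← Complex.cpow_add _ _ hBne]; ring_nf
    have h2 : ((n : ℂ) + 2) ^ (-(k:ℂ)) = (x : ℂ) ^ k := by
      rw [Complex.cpow_neg, Complex.cpow_natCast, ← inv_pow]
      congr 1
      rw [hB, hx]
      push_cast
      ring
    rw [h1, h2]; ring
  rw [tsum_congr hterm, tsum_mul_left, aux_binomial hs hx0 hx1]
  have hx2 : (1 - x : ℝ) = ((n:ℝ)+1) / ((n:ℝ)+2) := by
    rw [hx]; field_simp; ring
  have h3 : ((1 - x : ℝ) : ℂ) ^ (-s) = (((((n:ℝ)+1) / ((n:ℝ)+2)) : ℝ) : ℂ) ^ (-s) := by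
    rw [hx2]
  have h4 : ((n : ℂ) + 1) ^ (-s) = ((((n:ℝ)+1) : ℝ) : ℂ) ^ (-s) := by
    congr 1; push_cast; ring
  rw [h3, h4, hB]
  have h5 := Complex.mul_cpow_ofReal_nonneg (a := (n:ℝ)+2) (b := ((n:ℝ)+1)/((n:ℝ)+2))
    hBpos.le (by positivity) (-s)
  have h6 : (Complex.ofReal ((n:ℝ)+2)) * Complex.ofReal (((n:ℝ)+1)/((n:ℝ)+2))
      = Complex.ofReal ((n:ℝ)+1) := by
    rw [← Complex.ofReal_mul]
    congr 1
    field_simp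
  rw [h6] at h5
  rw [h5]
  ring

lemma aux_zeta_bound {s : ℂ} (hs : 1 < s.re) :
    ‖riemannZeta s - 1‖ ≤ ∑' n : ℕ, ((n : ℝ) + 2) ^ (-s.re) := by
  rw [aux_zeta_repr hs]
  refine (norm_tsum_le_tsum_norm ((aux_tail_summable hs).congr
    fun n => (aux_norm_cpow n).symm)).trans_eq ?_
  exact tsum_congr fun n => aux_norm_cpow n

lemma aux_two_pow {a σ : ℝ} (k : ℕ) (h : a + k ≤ σ) :
    (2:ℝ) ^ (a - σ) ≤ (1/2) ^ k := by
  have h1 : (2:ℝ) ^ (a - σ) ≤ (2:ℝ) ^ (-(k:ℝ)) :=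
    Real.rpow_le_rpow_of_exponent_le (by norm_num) (by linarith)
  have h2 : (2:ℝ) ^ (-(k:ℝ)) = (1/2:ℝ) ^ k := by
    rw [Real.rpow_neg (by norm_num), Real.rpow_natCast, one_div, inv_pow]
  linarith

/-- Main pointwise bound on the terms of the series. -/
lemma aux_term_bound {k : ℕ} {w : ℂ} {a b : ℝ} (ha : 1 < a) (haw : a ≤ w.re) (hwb : w.re ≤ b) :
    ‖Complex.Gamma (w + k) / (k.factorial : ℂ) * (riemannZeta (w + k) - 1)‖
      ≤ Real.Gamma (b + 2 + k) / k.factorial * (1/2) ^ k * ∑' n : ℕ, ((n:ℝ)+2) ^ (-a) := by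
  have hre : (w + (k:ℂ)).re = w.re + k := by simp
  have h1k : (1:ℝ) < w.re + k := by
    have : (0:ℝ) ≤ k := Nat.cast_nonneg k
    linarith
  have hT0 : (0:ℝ) ≤ ∑' n : ℕ, ((n:ℝ)+2) ^ (-a) :=
    tsum_nonneg fun n => (Real.rpow_pos_of_pos (by positivity) _).le
  have hgam : ‖Complex.Gamma (w + k)‖ ≤ Real.Gamma (b + 2 + k) := by
    refine (aux_abs_gamma_le (by rw [hre]; linarith)).trans ?_
    rw [hre]
    have := aux_gamma_mono (le_of_lt h1k) (by linarith : w.re + k ≤ b + k)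
    calc Real.Gamma (w.re + k) ≤ Real.Gamma (b + k + 2) := this
    _ = Real.Gamma (b + 2 + k) := by ring_nf
  have hzeta : ‖riemannZeta (w + k) - 1‖ ≤ (1/2) ^ k * ∑' n : ℕ, ((n:ℝ)+2) ^ (-a) := by
    refine (aux_zeta_bound (by rw [hre]; linarith)).trans ?_
    rw [hre]
    refine (aux_tail_le ha (by linarith)).trans ?_
    have := aux_two_pow (a := a) (σ := w.re + k) k (by linarith)
    exact mul_le_mul_of_nonneg_right this hT0
  rw [norm_mul, norm_div, Complex.norm_natCast]
  have hkf : (0:ℝ) < (k.factorial : ℝ) := by positivity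
  calc ‖Complex.Gamma (w + k)‖ / (k.factorial:ℝ) * ‖riemannZeta (w + k) - 1‖
      ≤ Real.Gamma (b + 2 + k) / (k.factorial:ℝ) * ((1/2) ^ k * ∑' n : ℕ, ((n:ℝ)+2) ^ (-a)) := by
        refine mul_le_mul (by gcongr) hzeta (norm_nonneg _) ?_
        have := Real.Gamma_pos_of_pos (show (0:ℝ) < b + 2 + k by
          have : (0:ℝ) ≤ k := Nat.cast_nonneg k; linarith)
        positivity
    _ = Real.Gamma (b + 2 + k) / k.factorial * (1/2) ^ k * ∑' n : ℕ, ((n:ℝ)+2) ^ (-a) := by ring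

/-- Cauchy estimate for `ζ'`. -/
lemma aux_zeta_deriv_bound {a ρ : ℝ} (ha : 1 < a) (hρ : 0 < ρ) {z : ℂ} (hz : a + ρ ≤ z.re) :
    ‖deriv riemannZeta z‖ ≤ 2 ^ (a + ρ - z.re) * ((∑' n : ℕ, ((n:ℝ)+2) ^ (-a)) / ρ) := by
  have hT0 : (0:ℝ) ≤ ∑' n : ℕ, ((n:ℝ)+2) ^ (-a) :=
    tsum_nonneg fun n => (Real.rpow_pos_of_pos (by positivity) _).le
  have hball : ∀ w : ℂ, w ∈ closedBall z ρ → 1 < w.re := by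
    intro w hw
    rw [mem_closedBall, Complex.dist_eq] at hw
    have h1 : |(w - z).re| ≤ ‖w - z‖ := Complex.abs_re_le_norm _
    rw [Complex.sub_re] at h1
    have := abs_le.1 h1
    linarith [this.1]
  have hd : DiffContOnCl ℂ (fun w => riemannZeta w - 1) (ball z ρ) := by
    refine DifferentiableOn.diffContOnCl ?_
    rw [closure_ball z hρ.ne']
    intro w hw
    have h1 := hball w hw
    have hw1 : w ≠ 1 := by
      intro h; rw [h] at h1; simp at h1
    exact ((differentiableAt_riemannZeta hw1).sub_const 1).differentiableWithinAt
  have hC : ∀ w ∈ sphere z ρ, ‖riemannZeta w - 1‖ ≤ 2 ^ (a + ρ - z.re) * ∑' n : ℕ, ((n:ℝ)+2) ^ (-a) := by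
    intro w hw
    rw [mem_sphere_iff_norm] at hw
    have h1 : |(w - z).re| ≤ ‖w - z‖ := Complex.abs_re_le_norm _
    rw [Complex.sub_re] at h1
    rw [show ‖w - z‖ = ‖w - z‖ from rfl, hw] at h1
    have hwre : a ≤ w.re := by
      have := abs_le.1 h1
      linarith [this.1]
    refine (aux_zeta_bound (by linarith)).trans ?_
    refine (aux_tail_le ha hwre).trans ?_
    have h2 : (2:ℝ) ^ (a - w.re) ≤ (2:ℝ) ^ (a + ρ - z.re) := by
      refine Real.rpow_le_rpow_of_exponent_le (by norm_num) ?_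
      have := abs_le.1 h1
      linarith [this.1]
    exact mul_le_mul_of_nonneg_right h2 hT0
  have key := Complex.norm_deriv_le_of_forall_mem_sphere_norm_le hρ hd hC
  have hder : deriv (fun w => riemannZeta w - 1) z = deriv riemannZeta z := by
    simp [deriv_sub_const]
  rw [hder] at key
  calc ‖deriv riemannZeta z‖ ≤ (2 ^ (a + ρ - z.re) * ∑' n : ℕ, ((n:ℝ)+2) ^ (-a)) / ρ := key
    _ = 2 ^ (a + ρ - z.re) * ((∑' n : ℕ, ((n:ℝ)+2) ^ (-a)) / ρ) := by ring

/-- Cauchy estimate for the derivative of the general term. -/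
lemma aux_g_deriv_bound {a b ρ : ℝ} (ha : 1 < a) (hρ : 0 < ρ) {s : ℂ}
    (h1 : a + ρ ≤ s.re) (h2 : s.re + ρ ≤ b) (k : ℕ) :
    ‖deriv (fun z => Complex.Gamma (z + k) / (k.factorial : ℂ) * (riemannZeta (z + k) - 1)) s‖
      ≤ Real.Gamma (b + 2 + k) / k.factorial * (1/2) ^ k * ((∑' n : ℕ, ((n:ℝ)+2) ^ (-a)) / ρ) := by
  have hball : ∀ w : ℂ, w ∈ closedBall s ρ → a ≤ w.re ∧ w.re ≤ b := by
    intro w hw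
    rw [mem_closedBall, Complex.dist_eq] at hw
    have h1' : |(w - s).re| ≤ ‖w - s‖ := Complex.abs_re_le_norm _
    rw [Complex.sub_re] at h1'
    have := abs_le.1 h1'
    constructor <;> linarith [this.1, this.2]
  have hd : DiffContOnCl ℂ
      (fun z => Complex.Gamma (z + k) / (k.factorial : ℂ) * (riemannZeta (z + k) - 1))
      (ball s ρ) := by
    refine DifferentiableOn.diffContOnCl ?_
    rw [closure_ball s hρ.ne']
    intro w hw
    have hre : 1 < (w + (k:ℂ)).re := by
      have := (hball w hw).1
      simp only [Complex.add_re, Complex.natCast_re]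
      have : (0:ℝ) ≤ k := Nat.cast_nonneg k
      linarith [(hball w hw).1]
    have hne : ∀ m : ℕ, w + (k:ℂ) ≠ -(m:ℂ) := by
      intro m hm
      have : (w + (k:ℂ)).re = -(m:ℝ) := by rw [hm]; simp
      rw [this] at hre
      have : (0:ℝ) ≤ m := Nat.cast_nonneg m
      linarith
    have hne1 : w + (k:ℂ) ≠ 1 := by
      intro h; rw [h] at hre; simp at hre
    have hΓ : DifferentiableAt ℂ (fun z : ℂ => Complex.Gamma (z + k)) w :=
      (Complex.differentiableAt_Gamma _ hne).comp w (differentiableAt_id.add_const _)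
    have hζ : DifferentiableAt ℂ (fun z : ℂ => riemannZeta (z + k)) w :=
      (differentiableAt_riemannZeta hne1).comp w (differentiableAt_id.add_const _)
    exact ((hΓ.div_const _).mul (hζ.sub_const 1)).differentiableWithinAt
  have hC : ∀ w ∈ sphere s ρ,
      ‖Complex.Gamma (w + k) / (k.factorial : ℂ) * (riemannZeta (w + k) - 1)‖
        ≤ Real.Gamma (b + 2 + k) / k.factorial * (1/2) ^ k * ∑' n : ℕ, ((n:ℝ)+2) ^ (-a) := by
    intro w hw
    have hw' : w ∈ closedBall s ρ := sphere_subset_closedBall hw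
    exact aux_term_bound ha (hball w hw').1 (hball w hw').2
  have key := Complex.norm_deriv_le_of_forall_mem_sphere_norm_le hρ hd hC
  calc _ ≤ _ := key
    _ = Real.Gamma (b + 2 + k) / k.factorial * (1/2) ^ k
        * ((∑' n : ℕ, ((n:ℝ)+2) ^ (-a)) / ρ) := by ring

lemma aux_base {s : ℂ} (hs : 1 < s.re) :
    ∑' k : ℕ, Complex.Gamma (s + k) / (k.factorial : ℂ) * (riemannZeta (s + k) - 1)
      = Complex.Gamma s * riemannZeta s := by
  set F : ℕ → ℕ → ℂ :=
    fun k n => Complex.Gamma (s + k) / (k.factorial : ℂ) * ((n : ℂ) + 2) ^ (-(s + k)) with hF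
  have hre : ∀ k : ℕ, (s + (k:ℂ)).re = s.re + k := by intro k; simp
  have hre1 : ∀ k : ℕ, 1 < (s + (k:ℂ)).re := by
    intro k; rw [hre]; have : (0:ℝ) ≤ k := Nat.cast_nonneg k; linarith
  -- norm formula
  have hnorm : ∀ k n : ℕ, ‖F k n‖
      = ‖Complex.Gamma (s + k)‖ / k.factorial * ((n:ℝ) + 2) ^ (-(s.re + k)) := by
    intro k n
    rw [hF]
    simp only []
    rw [norm_mul, norm_div, Complex.norm_natCast, aux_norm_cpow n, hre]
  have hT0 : (0:ℝ) ≤ ∑' n : ℕ, ((n:ℝ)+2) ^ (-s.re) :=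
    tsum_nonneg fun n => (Real.rpow_pos_of_pos (by positivity) _).le
  -- rows summable in norm
  have hrow : ∀ k : ℕ, Summable fun n => ‖F k n‖ := by
    intro k
    simp_rw [hnorm k]
    exact ((aux_tail_summable (show (1:ℝ) < s.re + k by
      have : (0:ℝ) ≤ k := Nat.cast_nonneg k; linarith)).mul_left _)
  -- row sums bounded
  have hrowsum : ∀ k : ℕ, ∑' n, ‖F k n‖
      ≤ Real.Gamma (s.re + k) / k.factorial * (1/2) ^ k * ∑' n : ℕ, ((n:ℝ)+2) ^ (-s.re) := by
    intro k
    have h1 : ∑' n, ‖F k n‖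
        = ‖Complex.Gamma (s + k)‖ / k.factorial * ∑' n : ℕ, ((n:ℝ) + 2) ^ (-(s.re + k)) := by
      simp_rw [hnorm k]; rw [tsum_mul_left]
    rw [h1]
    have h2 : ∑' n : ℕ, ((n:ℝ) + 2) ^ (-(s.re + k)) ≤ (1/2) ^ k * ∑' n : ℕ, ((n:ℝ)+2) ^ (-s.re) := by
      refine (aux_tail_le hs (by have : (0:ℝ) ≤ k := Nat.cast_nonneg k; linarith)).trans ?_
      exact mul_le_mul_of_nonneg_right (aux_two_pow k (by linarith)) hT0
    have h3 : ‖Complex.Gamma (s + k)‖ / (k.factorial:ℝ) ≤ Real.Gamma (s.re + k) / k.factorial := by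
      have := aux_abs_gamma_le (z := s + k) (by rw [hre]; have : (0:ℝ) ≤ k := Nat.cast_nonneg k; linarith)
      rw [hre] at this
      gcongr
    calc ‖Complex.Gamma (s + k)‖ / (k.factorial:ℝ) * ∑' n : ℕ, ((n:ℝ) + 2) ^ (-(s.re + k))
        ≤ Real.Gamma (s.re + k) / k.factorial * ((1/2) ^ k * ∑' n : ℕ, ((n:ℝ)+2) ^ (-s.re)) := by
          refine mul_le_mul h3 h2 (tsum_nonneg fun n => (Real.rpow_pos_of_pos (by positivity) _).le) ?_
          have := Real.Gamma_pos_of_pos (show (0:ℝ) < s.re + k by have : (0:ℝ) ≤ k := Nat.cast_nonneg k; linarith)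
          positivity
      _ = Real.Gamma (s.re + k) / k.factorial * (1/2) ^ k * ∑' n : ℕ, ((n:ℝ)+2) ^ (-s.re) := by ring
  -- summability of iterated norm sums
  have hrowsum_summable : Summable fun k => ∑' n, ‖F k n‖ := by
    refine Summable.of_nonneg_of_le (fun k => tsum_nonneg fun n => norm_nonneg _)
      (fun k => hrowsum k) ?_
    exact (aux_summable_gamma_pow (by linarith : (0:ℝ) < s.re) (by norm_num : (0:ℝ) < 1/2)
      (by norm_num)).mul_right _
  -- uncurried summability
  have huncurry : Summable (fun p : ℕ × ℕ => ‖F p.1 p.2‖) := by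
    rw [summable_prod_of_nonneg (fun p => norm_nonneg _)]
    exact ⟨fun k => hrow k, hrowsum_summable⟩
  have hFsummable : Summable (Function.uncurry F) := Summable.of_norm huncurry
  -- swap
  have hswap : ∑' k : ℕ, ∑' n : ℕ, F k n = ∑' n : ℕ, ∑' k : ℕ, F k n := by
    refine (Summable.tsum_comm' hFsummable ?_ ?_).symm
    · exact fun k => (hrow k).of_norm
    · intro n
      refine Summable.of_norm ?_
      exact huncurry.comp_injective (i := fun k : ℕ => (k, n))
        (fun k1 k2 h => by simpa using congrArg Prod.fst h)
  have hterm : ∀ k : ℕ, Complex.Gamma (s + k) / (k.factorial : ℂ) * (riemannZeta (s + k) - 1)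
      = ∑' n : ℕ, F k n := by
    intro k
    rw [aux_zeta_repr (hre1 k)]
    exact tsum_mul_left.symm
  calc ∑' k : ℕ, Complex.Gamma (s + k) / (k.factorial : ℂ) * (riemannZeta (s + k) - 1)
      = ∑' k : ℕ, ∑' n : ℕ, F k n := tsum_congr hterm
    _ = ∑' n : ℕ, ∑' k : ℕ, F k n := hswap
    _ = ∑' n : ℕ, Complex.Gamma s * ((n : ℂ) + 1) ^ (-s) :=
        tsum_congr fun n => aux_inner (by linarith : 0 < s.re) n
    _ = Complex.Gamma s * ∑' n : ℕ, ((n : ℂ) + 1) ^ (-s) := tsum_mul_left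
    _ = Complex.Gamma s * riemannZeta s := by
        rw [zeta_eq_tsum_one_div_nat_add_one_cpow hs]
        congr 1
        exact tsum_congr fun n => by rw [Complex.cpow_neg, one_div]

/-- The digamma function `ψ(z) = Γ'(z)/Γ(z)`. -/
noncomputable def cpsi (z : ℂ) : ℂ := deriv Complex.Gamma z / Complex.Gamma z

/-- `∑_{k=1}^∞ [Γ(α+k)/k!] ζ'(α+k) = Γ(α) ψ(α) ζ(α) - ∑_{k=0}^∞ [Γ(α+k)/k!] ψ(α+k) (ζ(α+k)-1)`
for `Re α > 1`, both series converging absolutely (the first, over `k ≥ 1`, is written with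
index shifted by 1). -/
theorem gamma_zeta_deriv_sum (α : ℂ) (hα : 1 < α.re) :
    Summable (fun k : ℕ =>
        ‖Complex.Gamma (α + k + 1) / ((k + 1).factorial : ℂ) * deriv riemannZeta (α + k + 1)‖) ∧
    Summable (fun k : ℕ =>
        ‖Complex.Gamma (α + k) / (k.factorial : ℂ) * cpsi (α + k) * (riemannZeta (α + k) - 1)‖) ∧
    ∑' k : ℕ, Complex.Gamma (α + k + 1) / ((k + 1).factorial : ℂ) * deriv riemannZeta (α + k + 1)
      = Complex.Gamma α * cpsi α * riemannZeta α
        - ∑' k : ℕ, Complex.Gamma (α + k) / (k.factorial : ℂ) * cpsi (α + k)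
            * (riemannZeta (α + k) - 1) := by
  have hA : 1 < α.re := hα
  set A : ℝ := α.re with hAdef
  set r : ℝ := (A - 1) / 4 with hrdef
  have hr : 0 < r := by rw [hrdef]; linarith
  set a : ℝ := A - 2 * r with hadef
  have ha : 1 < a := by rw [hadef, hrdef]; linarith
  set b : ℝ := A + 2 * r with hbdef
  set T : ℝ := ∑' n : ℕ, ((n:ℝ)+2) ^ (-a) with hTdef
  have hT0 : 0 ≤ T :=
    tsum_nonneg fun n => (Real.rpow_pos_of_pos (by positivity) _).le
  -- helpers
  have hne : ∀ z : ℂ, 0 < z.re → ∀ m : ℕ, z ≠ -(m:ℂ) := by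
    intro z hz m hzm
    rw [hzm] at hz
    simp only [Complex.neg_re, Complex.natCast_re] at hz
    have : (0:ℝ) ≤ m := Nat.cast_nonneg m
    linarith
  have hne1 : ∀ z : ℂ, 1 < z.re → z ≠ 1 := by
    intro z hz h
    rw [h] at hz
    simp at hz
  have hrek : ∀ k : ℕ, (α + (k:ℂ)).re = A + k := by intro k; simp [hAdef]
  have hrek1 : ∀ k : ℕ, 1 < (α + (k:ℂ)).re := by
    intro k; rw [hrek]; have : (0:ℝ) ≤ k := Nat.cast_nonneg k; linarith
  -- series of functions
  set g : ℕ → ℂ → ℂ :=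
    fun k z => Complex.Gamma (z + k) / (k.factorial : ℂ) * (riemannZeta (z + k) - 1) with hgdef
  set u : ℕ → ℝ := fun k => Real.Gamma (b + 2 + k) / k.factorial * (1/2) ^ k * (T / r) with hudef
  have hu_smb : Summable u :=
    (aux_summable_gamma_pow (show (0:ℝ) < b + 2 by rw [hbdef]; linarith)
      (by norm_num : (0:ℝ) < 1/2) (by norm_num)).mul_right _
  have hball : ∀ y ∈ Metric.ball α r, a + r ≤ y.re ∧ y.re + r ≤ b := by
    intro y hy
    rw [Metric.mem_ball, Complex.dist_eq] at hy
    have h1 : |(y - α).re| ≤ ‖y - α‖ := Complex.abs_re_le_norm _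
    rw [Complex.sub_re] at h1
    have h2 := abs_le.1 h1
    constructor
    · rw [hadef]; linarith [h2.1]
    · rw [hbdef]; linarith [h2.2]
  have hball1 : ∀ y ∈ Metric.ball α r, 1 < y.re := by
    intro y hy
    have := (hball y hy).1
    rw [hadef] at this
    linarith
  -- differentiability of each term
  have hgdiff : ∀ k : ℕ, ∀ y : ℂ, 1 < y.re → DifferentiableAt ℂ (g k) y := by
    intro k y hy
    have hre : 1 < (y + (k:ℂ)).re := by
      simp only [Complex.add_re, Complex.natCast_re]
      have : (0:ℝ) ≤ k := Nat.cast_nonneg k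
      linarith
    have hΓ : DifferentiableAt ℂ (fun z : ℂ => Complex.Gamma (z + k)) y :=
      (Complex.differentiableAt_Gamma _ (hne _ (by linarith))).comp y
        (differentiableAt_id.add_const _)
    have hζ : DifferentiableAt ℂ (fun z : ℂ => riemannZeta (z + k)) y :=
      (differentiableAt_riemannZeta (hne1 _ hre)).comp y (differentiableAt_id.add_const _)
    exact (hΓ.div_const _).mul (hζ.sub_const 1)
  have hu_bound : ∀ k : ℕ, ∀ y ∈ Metric.ball α r, ‖deriv (g k) y‖ ≤ u k := by
    intro k y hy
    exact aux_g_deriv_bound ha hr (hball y hy).1 (hball y hy).2 k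
  have hg0 : Summable fun k => g k α := by
    refine Summable.of_norm ?_
    refine Summable.of_nonneg_of_le (fun k => norm_nonneg _)
      (fun k => aux_term_bound ha (show a ≤ α.re by rw [hadef, ← hAdef]; linarith)
        (show α.re ≤ b by rw [hbdef, ← hAdef]; linarith)) ?_
    exact (aux_summable_gamma_pow (show (0:ℝ) < b + 2 by rw [hbdef]; linarith)
      (by norm_num : (0:ℝ) < 1/2) (by norm_num)).mul_right _
  -- term-by-term differentiation
  have key : HasDerivAt (fun z => ∑' k : ℕ, g k z) (∑' k : ℕ, deriv (g k) α) α :=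
    hasDerivAt_tsum_of_isPreconnected hu_smb Metric.isOpen_ball
      (convex_ball α r).isPreconnected
      (fun k y hy => ((hgdiff k y (hball1 y hy)).hasDerivAt))
      hu_bound (Metric.mem_ball_self hr) hg0 (Metric.mem_ball_self hr)
  have heq : (fun z => ∑' k : ℕ, g k z) =ᶠ[nhds α] (fun z => Complex.Gamma z * riemannZeta z) := by
    filter_upwards [Metric.ball_mem_nhds α hr] with z hz
    exact aux_base (hball1 z hz)
  have key2 : HasDerivAt (fun z => Complex.Gamma z * riemannZeta z)
      (∑' k : ℕ, deriv (g k) α) α := key.congr_of_eventuallyEq heq.symm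
  have key3 : HasDerivAt (fun z => Complex.Gamma z * riemannZeta z)
      (deriv Complex.Gamma α * riemannZeta α + Complex.Gamma α * deriv riemannZeta α) α :=
    ((Complex.differentiableAt_Gamma α (hne α (by linarith))).hasDerivAt).mul
      ((differentiableAt_riemannZeta (hne1 α hA)).hasDerivAt)
  have hder_eq : ∑' k : ℕ, deriv (g k) α
      = deriv Complex.Gamma α * riemannZeta α + Complex.Gamma α * deriv riemannZeta α :=
    key2.unique key3
  -- explicit derivative of each term
  have hg'val : ∀ k : ℕ, deriv (g k) α
      = deriv Complex.Gamma (α + k) / (k.factorial : ℂ) * (riemannZeta (α + k) - 1)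
        + Complex.Gamma (α + k) / (k.factorial : ℂ) * deriv riemannZeta (α + k) := by
    intro k
    have h1 : HasDerivAt (fun z : ℂ => Complex.Gamma (z + k)) (deriv Complex.Gamma (α + k)) α := by
      have h0 := ((Complex.differentiableAt_Gamma (α + k) (hne _ (by
        rw [hrek]; have : (0:ℝ) ≤ k := Nat.cast_nonneg k; linarith))).hasDerivAt)
      have h2 := HasDerivAt.comp α h0 ((hasDerivAt_id α).add_const (k:ℂ))
      rw [mul_one] at h2
      exact h2
    have h2 : HasDerivAt (fun z : ℂ => riemannZeta (z + k) - 1)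
        (deriv riemannZeta (α + k)) α := by
      have h0 := (differentiableAt_riemannZeta (hne1 _ (hrek1 k))).hasDerivAt
      have h3 := HasDerivAt.comp α h0 ((hasDerivAt_id α).add_const (k:ℂ))
      simpa using h3.sub_const 1
    exact ((h1.div_const (k.factorial : ℂ)).mul h2).deriv
  -- the two families
  set Ak : ℕ → ℂ :=
    fun k => Complex.Gamma (α + k) / (k.factorial : ℂ) * deriv riemannZeta (α + k) with hAkdef
  set Bk : ℕ → ℂ :=
    fun k => deriv Complex.Gamma (α + k) / (k.factorial : ℂ) * (riemannZeta (α + k) - 1)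
    with hBkdef
  have hAk_bound : ∀ k : ℕ, ‖Ak k‖
      ≤ Real.Gamma (A + k) / k.factorial * (1/2) ^ k * (2 ^ (a + r - A) * (T / r)) := by
    intro k
    rw [hAkdef]
    simp only []
    rw [norm_mul, norm_div, Complex.norm_natCast]
    have h1 : ‖Complex.Gamma (α + k)‖ ≤ Real.Gamma (A + k) := by
      have := aux_abs_gamma_le (z := α + k)
        (by rw [hrek]; have : (0:ℝ) ≤ k := Nat.cast_nonneg k; linarith)
      rwa [hrek] at this
    have h2 : ‖deriv riemannZeta (α + k)‖ ≤ 2 ^ (a + r - (A + k)) * (T / r) := by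
      have := aux_zeta_deriv_bound ha hr (z := α + k)
        (by rw [hrek, hadef]; have : (0:ℝ) ≤ k := Nat.cast_nonneg k; linarith)
      rwa [hrek] at this
    have h3 : (2:ℝ) ^ (a + r - (A + k)) = 2 ^ (a + r - A) * (1/2) ^ k := by
      rw [show a + r - (A + k) = (a + r - A) + (-(k:ℝ)) by ring,
        Real.rpow_add (by norm_num), Real.rpow_neg (by norm_num), Real.rpow_natCast,
        one_div, inv_pow]
    rw [h3] at h2
    have hkf : (0:ℝ) < (k.factorial : ℝ) := by positivity
    have hG0 : 0 < Real.Gamma (A + k) :=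
      Real.Gamma_pos_of_pos (by have : (0:ℝ) ≤ k := Nat.cast_nonneg k; linarith)
    calc ‖Complex.Gamma (α + k)‖ / (k.factorial:ℝ) * ‖deriv riemannZeta (α + k)‖
        ≤ Real.Gamma (A + k) / (k.factorial:ℝ) * (2 ^ (a + r - A) * (1/2) ^ k * (T / r)) := by
          refine mul_le_mul (by gcongr) h2 (norm_nonneg _) (by positivity)
      _ = Real.Gamma (A + k) / k.factorial * (1/2) ^ k * (2 ^ (a + r - A) * (T / r)) := by ring
  have hAk_norm_smb : Summable fun k => ‖Ak k‖ := by
    refine Summable.of_nonneg_of_le (fun k => norm_nonneg _) hAk_bound ?_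
    exact (aux_summable_gamma_pow (show (0:ℝ) < A by linarith)
      (by norm_num : (0:ℝ) < 1/2) (by norm_num)).mul_right _
  have hg'_norm_smb : Summable fun k => ‖deriv (g k) α‖ :=
    Summable.of_nonneg_of_le (fun k => norm_nonneg _)
      (fun k => hu_bound k α (Metric.mem_ball_self hr)) hu_smb
  have hBk_norm_smb : Summable fun k => ‖Bk k‖ := by
    refine Summable.of_nonneg_of_le (fun k => norm_nonneg _) (fun k => ?_)
      (hg'_norm_smb.add hAk_norm_smb)
    have hBA : Bk k = deriv (g k) α - Ak k := by
      rw [hg'val k, hAkdef, hBkdef]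
      ring
    rw [hBA]
    exact norm_sub_le _ _
  have hAs : Summable Ak := hAk_norm_smb.of_norm
  have hBs : Summable Bk := hBk_norm_smb.of_norm
  have hsum_split : ∑' k : ℕ, Bk k + ∑' k : ℕ, Ak k
      = deriv Complex.Gamma α * riemannZeta α + Complex.Gamma α * deriv riemannZeta α := by
    rw [← Summable.tsum_add hBs hAs, ← hder_eq]
    exact tsum_congr fun k => by rw [hg'val k]
  -- psi facts
  have hΓne : ∀ k : ℕ, Complex.Gamma (α + k) ≠ 0 := fun k =>
    Complex.Gamma_ne_zero (hne _
      (by rw [hrek]; have : (0:ℝ) ≤ k := Nat.cast_nonneg k; linarith))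
  have hpsi : ∀ z : ℂ, Complex.Gamma z ≠ 0 →
      Complex.Gamma z * cpsi z = deriv Complex.Gamma z := by
    intro z hz
    rw [cpsi, mul_comm, div_mul_cancel₀ _ hz]
  have hBkterm : ∀ k : ℕ, Complex.Gamma (α + k) / (k.factorial : ℂ) * cpsi (α + k)
      * (riemannZeta (α + k) - 1) = Bk k := by
    intro k
    have h := hpsi _ (hΓne k)
    rw [hBkdef]
    simp only []
    rw [show Complex.Gamma (α + k) / (k.factorial : ℂ) * cpsi (α + k) * (riemannZeta (α + k) - 1)
        = Complex.Gamma (α + k) * cpsi (α + k) / (k.factorial : ℂ) * (riemannZeta (α + k) - 1)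
      by ring, h]
  have hcast : ∀ k : ℕ, α + ((k:ℂ)+1) = α + (k:ℂ) + 1 := fun k => by ring
  have hAshift : ∀ k : ℕ, Complex.Gamma (α + k + 1) / (((k+1).factorial : ℕ) : ℂ)
      * deriv riemannZeta (α + k + 1) = Ak (k+1) := by
    intro k
    rw [hAkdef]
    simp only []
    rw [show ((k+1 : ℕ) : ℂ) = (k:ℂ) + 1 by push_cast; ring, hcast k]
  refine ⟨?_, ?_, ?_⟩
  · refine ((summable_nat_add_iff 1).2 hAk_norm_smb).congr fun k => ?_
    rw [← hAshift k]
  · refine hBk_norm_smb.congr fun k => ?_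
    rw [← hBkterm k]
  · have hA_split := Summable.tsum_eq_zero_add hAs
    have h0 : Ak 0 = Complex.Gamma α * deriv riemannZeta α := by
      rw [hAkdef]
      simp
    have hS : ∑' k : ℕ, Ak (k+1)
        = deriv Complex.Gamma α * riemannZeta α - ∑' k : ℕ, Bk k := by
      have hs2 : ∑' k : ℕ, Ak (k+1) = (∑' k : ℕ, Ak k) - Ak 0 := by
        rw [hA_split]; ring
      rw [hs2, h0]
      linear_combination hsum_split
    calc ∑' k : ℕ, Complex.Gamma (α + k + 1) / (((k+1).factorial : ℕ) : ℂ)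
          * deriv riemannZeta (α + k + 1)
        = ∑' k : ℕ, Ak (k+1) := tsum_congr fun k => hAshift k
      _ = deriv Complex.Gamma α * riemannZeta α - ∑' k : ℕ, Bk k := hS
      _ = Complex.Gamma α * cpsi α * riemannZeta α
          - ∑' k : ℕ, Complex.Gamma (α + k) / (k.factorial : ℂ) * cpsi (α + k)
              * (riemannZeta (α + k) - 1) := by
        rw [hpsi α (by
          have := hΓne 0
          simpa using this)]
        congr 1
        exact (tsum_congr fun k => hBkterm k).symm
end
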